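/- arXiv:0908.3644 — 7 statements merged into one kernel-verified Lean document; each statement's English description precedes it below -/
import Mathlib

section
/- For positive integers K, P with 2K ≤ P, setting q = C(P-K, K)/C(P, K), we have 1 - exp(-K²/P) ≤ 1 - q ≤ K²/(P - K). -/
open Finset

lemma ratio_prod (P K : ℕ) (h : 2 * K ≤ P) :
    ∀ k, k ≤ K → ((P - K).choose k : ℝ) / (P.choose k : ℝ) =
      ∏ i ∈ Finset.range k, (((P : ℝ) - K - i) / ((P : ℝ) - i)) := by
  have hKP : K ≤ P := le_trans (by omega) h
  intro k hk
  induction k with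
  | zero => simp
  | succ k ih =>
    have hkK : k ≤ K := by omega
    have hkP : k + 1 ≤ P := by omega
    have hkPK : k + 1 ≤ P - K := by omega
    have h1 : (P.choose (k+1) : ℝ) * (k+1) = (P.choose k : ℝ) * ((P : ℝ) - k) := by
      have := Nat.choose_succ_right_eq P k
      have hc : ((P.choose (k+1) * (k+1) : ℕ) : ℝ) = ((P.choose k * (P - k) : ℕ) : ℝ) := by
        exact_mod_cast congrArg (Nat.cast (R := ℝ)) this
      push_cast [Nat.cast_sub (by omega : k ≤ P)] at hc
      linarith
    have h2 : ((P-K).choose (k+1) : ℝ) * (k+1) = ((P-K).choose k : ℝ) * ((P : ℝ) - K - k) := by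
      have := Nat.choose_succ_right_eq (P - K) k
      have hc : (((P-K).choose (k+1) * (k+1) : ℕ) : ℝ) = (((P-K).choose k * (P - K - k) : ℕ) : ℝ) := by
        exact_mod_cast congrArg (Nat.cast (R := ℝ)) this
      push_cast [Nat.cast_sub (by omega : k ≤ P - K), Nat.cast_sub hKP] at hc
      linarith
    have hPk : (P.choose k : ℝ) ≠ 0 := by
      exact_mod_cast Nat.choose_pos (by omega : k ≤ P) |>.ne'
    have hPk1 : (P.choose (k+1) : ℝ) ≠ 0 := by
      exact_mod_cast Nat.choose_pos hkP |>.ne'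
    have hPik : ((P : ℝ) - k) ≠ 0 := by
      have : (k : ℝ) < P := by exact_mod_cast (by omega : k < P)
      linarith
    have hk1 : ((k : ℝ) + 1) ≠ 0 := by positivity
    rw [Finset.prod_range_succ, ← ih hkK]
    field_simp
    nlinarith [mul_pos (Nat.cast_pos.mpr (Nat.choose_pos (by omega : k ≤ P)) : (0:ℝ) < P.choose k) (Nat.cast_pos.mpr (Nat.choose_pos hkP) : (0:ℝ) < P.choose (k+1))]

/-- For positive integers `K, P` with `2K ≤ P` and `q = C(P-K,K)/C(P,K)`,
`1 - exp(-K²/P) ≤ 1 - q ≤ K²/(P-K)`. -/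
theorem stmt2 (K P : ℕ) (hK : 0 < K) (hP : 0 < P) (h : 2 * K ≤ P)
    (q : ℝ) (hq : q = ((P - K).choose K : ℝ) / (P.choose K : ℝ)) :
    1 - Real.exp (-((K : ℝ) ^ 2 / (P : ℝ))) ≤ 1 - q ∧
      1 - q ≤ (K : ℝ) ^ 2 / ((P : ℝ) - (K : ℝ)) := by
  have hKP : (K : ℝ) ≤ (P : ℝ) - K := by
    have : (2 * K : ℝ) ≤ P := by exact_mod_cast h
    linarith
  have hKpos : (0 : ℝ) < K := by exact_mod_cast hK
  have hPpos : (0 : ℝ) < P := by exact_mod_cast hP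
  have hPK : (0 : ℝ) < (P : ℝ) - K := lt_of_lt_of_le hKpos hKP
  have hqprod : q = ∏ i ∈ Finset.range K, (((P : ℝ) - K - i) / ((P : ℝ) - i)) := by
    rw [hq, ratio_prod P K h K le_rfl]
  -- bounds on each factor
  have hfac_lb : ∀ i ∈ Finset.range K, (1 - (K : ℝ) / ((P : ℝ) - K)) ≤ ((P : ℝ) - K - i) / ((P : ℝ) - i) := by
    intro i hi
    rw [Finset.mem_range] at hi
    have hiK : (i : ℝ) ≤ (K : ℝ) - 1 := by exact_mod_cast (by omega : (i : ℤ) ≤ K - 1)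
    have hPi : (0 : ℝ) < (P : ℝ) - i := by linarith
    have he : 1 - (K : ℝ) / ((P : ℝ) - K) = ((P : ℝ) - 2 * K) / ((P : ℝ) - K) := by
      field_simp
      ring
    rw [he, div_le_div_iff₀ hPK hPi]
    nlinarith
  have hfac_ub : ∀ i ∈ Finset.range K, ((P : ℝ) - K - i) / ((P : ℝ) - i) ≤ Real.exp (-((K : ℝ) / P)) := by
    intro i hi
    rw [Finset.mem_range] at hi
    have hiK : (i : ℝ) ≤ (K : ℝ) - 1 := by exact_mod_cast (by omega : (i : ℤ) ≤ K - 1)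
    have hPi : (0 : ℝ) < (P : ℝ) - i := by linarith
    have h1 : ((P : ℝ) - K - i) / ((P : ℝ) - i) ≤ 1 - (K : ℝ) / P := by
      rw [div_le_iff₀ hPi]
      have : (K : ℝ) / P * ((P : ℝ) - i) ≤ (K : ℝ) := by
        rw [div_mul_eq_mul_div, div_le_iff₀ hPpos]
        nlinarith [Nat.cast_nonneg (α := ℝ) i]
      nlinarith
    have h2 : 1 - (K : ℝ) / P ≤ Real.exp (-((K : ℝ) / P)) := by
      have h3 := Real.add_one_le_exp (-((K : ℝ) / P))
      linarith
    linarith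
  have hfac_nonneg : ∀ i ∈ Finset.range K, (0 : ℝ) ≤ ((P : ℝ) - K - i) / ((P : ℝ) - i) := by
    intro i hi
    rw [Finset.mem_range] at hi
    have hiK : (i : ℝ) ≤ (K : ℝ) - 1 := by exact_mod_cast (by omega : (i : ℤ) ≤ K - 1)
    have hPi : (0 : ℝ) < (P : ℝ) - i := by linarith
    apply div_nonneg _ hPi.le
    linarith
  constructor
  · -- q ≤ exp(-K²/P)
    have hub : q ≤ (Real.exp (-((K : ℝ) / P))) ^ K := by
      rw [hqprod]
      calc ∏ i ∈ Finset.range K, (((P : ℝ) - K - i) / ((P : ℝ) - i))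
          ≤ ∏ i ∈ Finset.range K, Real.exp (-((K : ℝ) / P)) :=
            Finset.prod_le_prod hfac_nonneg hfac_ub
        _ = (Real.exp (-((K : ℝ) / P))) ^ K := by rw [Finset.prod_const, Finset.card_range]
    have : (Real.exp (-((K : ℝ) / P))) ^ K = Real.exp (-((K : ℝ) ^ 2 / P)) := by
      rw [← Real.exp_nat_mul]
      congr 1
      ring
    linarith [this ▸ hub]
  · -- 1 - K²/(P-K) ≤ q
    have hlb : (1 - (K : ℝ) / ((P : ℝ) - K)) ^ K ≤ q := by
      rw [hqprod]
      calc (1 - (K : ℝ) / ((P : ℝ) - K)) ^ K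
          = ∏ i ∈ Finset.range K, (1 - (K : ℝ) / ((P : ℝ) - K)) := by
            rw [Finset.prod_const, Finset.card_range]
        _ ≤ ∏ i ∈ Finset.range K, (((P : ℝ) - K - i) / ((P : ℝ) - i)) := by
            apply Finset.prod_le_prod _ hfac_lb
            intro i _
            have : (K : ℝ) / ((P : ℝ) - K) ≤ 1 := by
              rw [div_le_one hPK]; linarith
            linarith
    have hbern : 1 + (K : ℝ) * (-(K : ℝ) / ((P : ℝ) - K)) ≤ (1 + (-(K : ℝ) / ((P : ℝ) - K))) ^ K := by
      apply one_add_mul_le_pow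
      have h4 : (K : ℝ) / ((P : ℝ) - K) ≤ 1 := by
        rw [div_le_one hPK]; linarith
      rw [neg_div]
      linarith
    have heq : 1 + (K : ℝ) * (-(K : ℝ) / ((P : ℝ) - K)) = 1 - (K : ℝ) ^ 2 / ((P : ℝ) - K) := by
      field_simp
      ring
    have heq2 : (1 + (-(K : ℝ) / ((P : ℝ) - K))) = 1 - (K : ℝ) / ((P : ℝ) - K) := by ring
    rw [heq, heq2] at hbern
    linarith
end

section
/- Let P_n, K_n be sequences of positive integers with K_n ≤ P_n, and let q_n = C(P_n - K_n, K_n)/C(P_n, K_n) when 2K_n ≤ P_n (and q_n = 0 otherwise). Then lim_{n→∞} q_n = 1 if and only if lim_{n→∞} K_n²/P_n = 0, and under either condition 1 - q_n is asymptotically equivalent to K_n²/P_n, i.e., lim_{n→∞} (P_n/K_n²)·(1 - q_n) = 1. -/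
open Filter Finset Nat

private lemma weier (s : Finset ℕ) (f : ℕ → ℝ) (h0 : ∀ i ∈ s, 0 ≤ f i)
    (h1 : ∀ i ∈ s, f i ≤ 1) :
    1 - ∑ i ∈ s, f i ≤ ∏ i ∈ s, (1 - f i) := by
  induction s using Finset.cons_induction with
  | empty => simp
  | cons a s ha ih =>
    rw [Finset.prod_cons, Finset.sum_cons]
    have h0a := h0 a (Finset.mem_cons_self a s)
    have h1a := h1 a (Finset.mem_cons_self a s)
    have ih' := ih (fun i hi => h0 i (Finset.mem_cons_of_mem hi))
      (fun i hi => h1 i (Finset.mem_cons_of_mem hi))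
    have hsum : (0:ℝ) ≤ ∑ i ∈ s, f i :=
      Finset.sum_nonneg fun i hi => h0 i (Finset.mem_cons_of_mem hi)
    nlinarith [ih']

private lemma prod_form (k p : ℕ) (hk : 0 < k) (h2 : 2 * k ≤ p) :
    ((p - k).choose k : ℝ) / ((p).choose k : ℝ)
      = ∏ i ∈ Finset.range k, (1 - (k : ℝ) / ((p : ℝ) - i)) := by
  have e1 := Nat.descFactorial_eq_factorial_mul_choose (p - k) k
  have e2 := Nat.descFactorial_eq_factorial_mul_choose p k
  have hfac : (0:ℝ) < (k ! : ℝ) := by exact_mod_cast k.factorial_pos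
  have step1 : ((p - k).choose k : ℝ) / ((p).choose k : ℝ)
      = ((p - k).descFactorial k : ℝ) / ((p).descFactorial k : ℝ) := by
    rw [e1, e2]
    push_cast
    rw [mul_div_mul_left _ _ hfac.ne']
  rw [step1, Nat.descFactorial_eq_prod_range, Nat.descFactorial_eq_prod_range,
    Nat.cast_prod, Nat.cast_prod, ← Finset.prod_div_distrib]
  refine Finset.prod_congr rfl fun i hi => ?_
  have hik : i < k := Finset.mem_range.mp hi
  have h1 : ((p - k - i : ℕ) : ℝ) = (p : ℝ) - k - i := by
    rw [Nat.cast_sub (by omega : i ≤ p - k), Nat.cast_sub (by omega : k ≤ p)]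
  have h2' : ((p - i : ℕ) : ℝ) = (p : ℝ) - i := Nat.cast_sub (by omega)
  have hpi : (0:ℝ) < (p : ℝ) - i := by
    have : (i:ℝ) < (p:ℝ) := by exact_mod_cast (by omega : i < p)
    linarith
  rw [h1, h2']
  field_simp
  ring

private lemma key_bounds (k p : ℕ) (hk : 0 < k) (h2 : 2 * k ≤ p) :
    1 - (k : ℝ) ^ 2 / ((p : ℝ) - k) ≤ ((p - k).choose k : ℝ) / ((p).choose k : ℝ) ∧
    ((p - k).choose k : ℝ) / ((p).choose k : ℝ) ≤ 1 / (1 + (k : ℝ) ^ 2 / p) := by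
  have hkR : (0:ℝ) < (k:ℝ) := by exact_mod_cast hk
  have hpR : (0:ℝ) < (p:ℝ) := by exact_mod_cast (by omega : 0 < p)
  have hpk : (k:ℝ) < (p:ℝ) := by exact_mod_cast (by omega : k < p)
  have h2R : (2:ℝ) * k ≤ p := by exact_mod_cast h2
  have hd : (0:ℝ) < (p:ℝ) - k := by linarith
  have hfacts : ∀ i ∈ Finset.range k, (0:ℝ) ≤ (k : ℝ) / ((p : ℝ) - i) ∧
      (k : ℝ) / ((p : ℝ) - i) ≤ (k : ℝ) / ((p : ℝ) - k) ∧
      (k : ℝ) / ((p : ℝ) - i) ≤ 1 ∧ (k:ℝ) / p ≤ (k : ℝ) / ((p : ℝ) - i) := by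
    intro i hi
    have hik : i < k := Finset.mem_range.mp hi
    have hiR : (i:ℝ) < (k:ℝ) := by exact_mod_cast hik
    have hdi : (0:ℝ) < (p:ℝ) - i := by linarith
    refine ⟨div_nonneg hkR.le hdi.le, div_le_div_of_nonneg_left hkR.le hd (by linarith),
      ?_, div_le_div_of_nonneg_left hkR.le hdi (by linarith)⟩
    rw [div_le_one hdi]; linarith
  rw [prod_form k p hk h2]
  constructor
  · have hw := weier (Finset.range k) (fun i => (k : ℝ) / ((p : ℝ) - i))
      (fun i hi => (hfacts i hi).1) (fun i hi => (hfacts i hi).2.2.1)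
    have hsum : ∑ i ∈ Finset.range k, (k : ℝ) / ((p : ℝ) - i)
        ≤ (k:ℝ) ^ 2 / ((p:ℝ) - k) := by
      calc ∑ i ∈ Finset.range k, (k : ℝ) / ((p : ℝ) - i)
          ≤ ∑ _i ∈ Finset.range k, (k : ℝ) / ((p : ℝ) - k) :=
            Finset.sum_le_sum fun i hi => (hfacts i hi).2.1
        _ = (k:ℝ) * ((k : ℝ) / ((p : ℝ) - k)) := by
            rw [Finset.sum_const, Finset.card_range, nsmul_eq_mul]
        _ = (k:ℝ) ^ 2 / ((p:ℝ) - k) := by ring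
    linarith
  · set t : ℝ := (k:ℝ) / p with ht
    have ht0 : 0 ≤ t := div_nonneg hkR.le hpR.le
    have ht1 : t ≤ 1 / 2 := by
      rw [ht, div_le_div_iff₀ hpR (by norm_num)]; linarith
    have hstep : ∏ i ∈ Finset.range k, (1 - (k : ℝ) / ((p : ℝ) - i)) ≤ (1 - t) ^ k := by
      calc ∏ i ∈ Finset.range k, (1 - (k : ℝ) / ((p : ℝ) - i))
          ≤ ∏ _i ∈ Finset.range k, (1 - t) :=
            Finset.prod_le_prod (fun i hi => by linarith [(hfacts i hi).2.2.1])
              (fun i hi => by linarith [(hfacts i hi).2.2.2])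
        _ = (1 - t) ^ k := by rw [Finset.prod_const, Finset.card_range]
    have hb : 1 + (k:ℝ) * t ≤ (1 + t) ^ k := one_add_mul_le_pow (by linarith) k
    have hprod : (1 - t) ^ k * (1 + t) ^ k ≤ 1 := by
      rw [← mul_pow]
      exact pow_le_one₀ (by nlinarith) (by nlinarith)
    have hpos : (0:ℝ) < 1 + (k:ℝ) * t := by positivity
    have hfinal : (1 - t) ^ k ≤ 1 / (1 + (k:ℝ) * t) := by
      rw [le_div_iff₀ hpos]
      calc (1 - t) ^ k * (1 + (k:ℝ) * t) ≤ (1 - t) ^ k * (1 + t) ^ k :=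
            mul_le_mul_of_nonneg_left hb (pow_nonneg (by linarith) k)
        _ ≤ 1 := hprod
    have hkt : (k:ℝ) * t = (k:ℝ) ^ 2 / p := by rw [ht]; ring
    rw [hkt] at hfinal
    exact le_trans hstep hfinal

/-- For sequences of positive integers `K_n ≤ P_n`, with
`q_n = C(P_n-K_n, K_n)/C(P_n, K_n)` when `2K_n ≤ P_n` and `q_n = 0` otherwise:
`q_n → 1` iff `K_n²/P_n → 0`, and under either condition `(P_n/K_n²)(1-q_n) → 1`. -/
theorem stmt4 (K P : ℕ → ℕ) (hK : ∀ n, 0 < K n) (hKP : ∀ n, K n ≤ P n)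
    (q : ℕ → ℝ)
    (hq : ∀ n, q n = if 2 * K n ≤ P n then
      ((P n - K n).choose (K n) : ℝ) / ((P n).choose (K n) : ℝ) else 0) :
    (Tendsto q atTop (nhds 1) ↔
      Tendsto (fun n => (K n : ℝ) ^ 2 / (P n : ℝ)) atTop (nhds 0)) ∧
    (Tendsto q atTop (nhds 1) →
      Tendsto (fun n => ((P n : ℝ) / (K n : ℝ) ^ 2) * (1 - q n)) atTop (nhds 1)) := by
  set x : ℕ → ℝ := fun n => (K n : ℝ) ^ 2 / (P n : ℝ) with hx
  have hkR : ∀ n, (0:ℝ) < (K n : ℝ) := fun n => by exact_mod_cast hK n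
  have hpR : ∀ n, (0:ℝ) < (P n : ℝ) := fun n => by
    exact_mod_cast Nat.lt_of_lt_of_le (hK n) (hKP n)
  have hxpos : ∀ n, (0:ℝ) < x n := fun n =>
    div_pos (pow_pos (hkR n) 2) (hpR n)
  have hxd : ∀ n, x n * (P n : ℝ) = (K n : ℝ) ^ 2 := fun n =>
    div_mul_cancel₀ _ (hpR n).ne'
  have hcond : ∀ n, x n < 1/2 → 2 * K n ≤ P n := by
    intro n hn
    by_contra hc
    have h1 : (P n : ℝ) < 2 * K n := by exact_mod_cast Nat.lt_of_not_le hc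
    have h2 : (1:ℝ) ≤ (K n : ℝ) := by exact_mod_cast hK n
    have h3 : (K n : ℝ) ^ 2 / (P n : ℝ) < 1/2 := hn
    rw [div_lt_iff₀ (hpR n)] at h3
    nlinarith [hpR n]
  -- forward direction: q → 1 ⇒ x → 0
  have fwd : Tendsto q atTop (nhds 1) → Tendsto x atTop (nhds 0) := by
    intro h
    have hev : ∀ᶠ n in atTop, 1/2 < q n := h.eventually (eventually_gt_nhds (by norm_num))
    have hg : Tendsto (fun n => (1 - q n) / q n) atTop (nhds 0) := by
      have h2 := (h.const_sub 1).div h one_ne_zero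
      simp only [sub_self, zero_div] at h2
      exact h2
    refine squeeze_zero' ?_ ?_ hg
    · exact Eventually.of_forall fun n => (hxpos n).le
    · filter_upwards [hev] with n hn
      have hqpos : 0 < q n := by linarith
      by_cases hc : 2 * K n ≤ P n
      · have hb := (key_bounds (K n) (P n) (hK n) hc).2
        have hqe : q n = ((P n - K n).choose (K n) : ℝ) / ((P n).choose (K n) : ℝ) := by
          rw [hq n, if_pos hc]
        have hqb : q n ≤ 1 / (1 + x n) := by rw [hqe]; exact hb
        have hpos : (0:ℝ) < 1 + x n := by linarith [hxpos n]
        have h1 : q n * (1 + x n) ≤ 1 := (le_div_iff₀ hpos).mp hqb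
        rw [le_div_iff₀ hqpos]
        nlinarith [h1]
      · rw [hq n, if_neg hc] at hn; norm_num at hn
  -- backward direction: x → 0 ⇒ q → 1
  have bwd : Tendsto x atTop (nhds 0) → Tendsto q atTop (nhds 1) := by
    intro h
    have hev : ∀ᶠ n in atTop, x n < 1/2 := h.eventually (eventually_lt_nhds (by norm_num))
    have hlo : Tendsto (fun n => 1 - 2 * x n) atTop (nhds 1) := by
      have := (h.const_mul 2).const_sub 1
      simpa using this
    refine tendsto_of_tendsto_of_tendsto_of_le_of_le' hlo tendsto_const_nhds ?_ ?_
    · filter_upwards [hev] with n hn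
      have hc := hcond n hn
      have hb := (key_bounds (K n) (P n) (hK n) hc).1
      rw [hq n, if_pos hc]
      have h2R : (2:ℝ) * K n ≤ P n := by exact_mod_cast hc
      have hd : (0:ℝ) < (P n : ℝ) - K n := by linarith [hkR n]
      have key : (K n : ℝ) ^ 2 / ((P n : ℝ) - K n) ≤ 2 * x n := by
        rw [div_le_iff₀ hd, ← hxd n]
        nlinarith [mul_nonneg (hxpos n).le (by linarith : (0:ℝ) ≤ (P n : ℝ) - 2 * K n)]
      linarith
    · filter_upwards [hev] with n hn
      have hc := hcond n hn
      have hb := (key_bounds (K n) (P n) (hK n) hc).2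
      rw [hq n, if_pos hc]
      have h1 : 1 / (1 + x n) ≤ 1 := by
        rw [div_le_one (by linarith [hxpos n])]; linarith [hxpos n]
      linarith
  refine ⟨⟨fwd, bwd⟩, ?_⟩
  intro h
  have hxt := fwd h
  have hev : ∀ᶠ n in atTop, x n < 1/2 := hxt.eventually (eventually_lt_nhds (by norm_num))
  have hlo : Tendsto (fun n => 1 / (1 + x n)) atTop (nhds 1) := by
    have h2 := (hxt.const_add 1).inv₀ (by norm_num)
    simpa [one_div] using h2
  have hhi : Tendsto (fun n => 1 / (1 - x n)) atTop (nhds 1) := by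
    have h2 := (hxt.const_sub 1).inv₀ (by norm_num)
    simpa [one_div] using h2
  refine tendsto_of_tendsto_of_tendsto_of_le_of_le' hlo hhi ?_ ?_
  · -- 1/(1+x) ≤ (p/k²)(1-q)
    filter_upwards [hev] with n hn
    have hc := hcond n hn
    have hb := (key_bounds (K n) (P n) (hK n) hc).2
    rw [hq n, if_pos hc]
    set r := ((P n - K n).choose (K n) : ℝ) / ((P n).choose (K n) : ℝ) with hr
    have hpos : (0:ℝ) < 1 + x n := by linarith [hxpos n]
    have hratio : (P n : ℝ) / (K n : ℝ) ^ 2 = 1 / x n := by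
      rw [hx]; rw [one_div_div]
    have h1 : 1 - 1 / (1 + x n) ≤ 1 - r := by linarith
    have h2 : ((P n : ℝ) / (K n : ℝ) ^ 2) * (1 - 1 / (1 + x n))
        ≤ ((P n : ℝ) / (K n : ℝ) ^ 2) * (1 - r) :=
      mul_le_mul_of_nonneg_left h1 (by positivity)
    have h3 : ((P n : ℝ) / (K n : ℝ) ^ 2) * (1 - 1 / (1 + x n)) = 1 / (1 + x n) := by
      rw [hratio]
      have hxne : x n ≠ 0 := (hxpos n).ne'
      field_simp
      ring
    linarith
  · -- (p/k²)(1-q) ≤ 1/(1-x)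
    filter_upwards [hev] with n hn
    have hc := hcond n hn
    have hb := (key_bounds (K n) (P n) (hK n) hc).1
    rw [hq n, if_pos hc]
    set r := ((P n - K n).choose (K n) : ℝ) / ((P n).choose (K n) : ℝ) with hr
    have h2R : (2:ℝ) * K n ≤ P n := by exact_mod_cast hc
    have hd : (0:ℝ) < (P n : ℝ) - K n := by linarith [hkR n]
    have hone : (1:ℝ) ≤ (K n : ℝ) := by exact_mod_cast hK n
    have h1 : 1 - r ≤ (K n : ℝ) ^ 2 / ((P n : ℝ) - K n) := by linarith
    have h2 : ((P n : ℝ) / (K n : ℝ) ^ 2) * (1 - r)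
        ≤ ((P n : ℝ) / (K n : ℝ) ^ 2) * ((K n : ℝ) ^ 2 / ((P n : ℝ) - K n)) :=
      mul_le_mul_of_nonneg_left h1 (by positivity)
    have h3 : ((P n : ℝ) / (K n : ℝ) ^ 2) * ((K n : ℝ) ^ 2 / ((P n : ℝ) - K n))
        = (P n : ℝ) / ((P n : ℝ) - K n) := by
      rw [_root_.div_mul_div_comm, div_eq_div_iff (by positivity) hd.ne']
      ring
    have h4 : (P n : ℝ) / ((P n : ℝ) - K n) ≤ 1 / (1 - x n) := by
      have hx1 : (0:ℝ) < 1 - x n := by linarith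
      rw [div_le_div_iff₀ hd hx1]
      nlinarith [hxd n, hone, hkR n]
    linarith
end

section
/- In the random key graph K(n; K, P) with 2K ≤ P, for any spanning tree T on a vertex subset {1,…,r} (2 ≤ r ≤ n), the probability that every edge of T is present in the random key graph equals (1 - q)^{r-1}, where q = C(P-K, K)/C(P, K). -/
open Finset

/-- A key ring: a `K`-element subset of the key pool `{1,…,P}`. -/
abbrev KeyRing (P K : ℕ) := {S : Finset (Fin P) // S.card = K}

open Classical in
/-- Probability of an event under independent uniform assignment of key rings
to `n` nodes. -/
noncomputable def pr (n P K : ℕ) (E : (Fin n → KeyRing P K) → Prop) : ℝ :=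
  ((Finset.univ : Finset (Fin n → KeyRing P K)).filter (fun κ => E κ)).card /
    (Fintype.card (Fin n → KeyRing P K) : ℝ)

/-- The random key graph: distinct nodes are adjacent iff their key rings intersect. -/
def rkg {n P K : ℕ} (κ : Fin n → KeyRing P K) : SimpleGraph (Fin n) where
  Adj i j := i ≠ j ∧ ((κ i).1 ∩ (κ j).1).Nonempty
  symm := ⟨fun i j ⟨h1, h2⟩ => ⟨h1.symm, by rwa [Finset.inter_comm]⟩⟩
  loopless := ⟨fun i ⟨h, _⟩ => h rfl⟩

lemma my_filter_card_congr {α : Type*} (p q : α → Prop) (ip : DecidablePred p)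
    (iq : DecidablePred q) (s : Finset α) (H : ∀ x ∈ s, p x ↔ q x) :
    (@Finset.filter _ p ip s).card = (@Finset.filter _ q iq s).card := by
  congr 1
  ext a
  rw [@Finset.mem_filter _ _ ip, @Finset.mem_filter _ _ iq]
  exact and_congr_right (fun ha => H a ha)

open Function in
lemma count_constraints {V α : Type*} [Fintype V] [DecidableEq V] [Fintype α] [Nonempty α]
    (R : α → α → Prop) [DecidableRel R] (c : ℕ) (hc : ∀ a, (univ.filter (fun b => R b a)).card = c)
    (p : V → V) (ρ : V → ℕ) :
    ∀ s : Finset V, (∀ v ∈ s, ρ (p v) < ρ v) →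
    ((univ : Finset (V → α)).filter (fun f => ∀ v ∈ s, R (f v) (f (p v)))).card
      * Fintype.card α ^ s.card
      = c ^ s.card * Fintype.card α ^ Fintype.card V := by
  classical
  intro s
  induction s using Finset.strongInduction with
  | _ s IH =>
    intro hs
    rcases s.eq_empty_or_nonempty with rfl | hne
    · simp [Fintype.card_fun]
    obtain ⟨v, hv, hmax⟩ := s.exists_max_image ρ hne
    have hρv : ρ (p v) < ρ v := hs v hv
    have hpv : p v ≠ v := fun h => by rw [h] at hρv; omega
    set s' := s.erase v with hs'
    have hss' : s' ⊂ s := Finset.erase_ssubset hv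
    have hne' : ∀ {u}, u ∈ s' → u ≠ v := by
      intro u hu; rw [hs'] at hu; exact Finset.ne_of_mem_erase hu
    have hmem : ∀ {u}, u ∈ s' → u ∈ s := by
      intro u hu; rw [hs'] at hu; exact Finset.mem_of_mem_erase hu
    have hmem2 : ∀ {u}, u ∈ s → u ≠ v → u ∈ s' := by
      intro u h1 h2; rw [hs']; exact Finset.mem_erase.mpr ⟨h2, h1⟩
    have hps' : ∀ u ∈ s', p u ≠ v := by
      intro u hu heq
      have h1 : ρ (p u) < ρ u := hs u (hmem hu)
      have h2 : ρ u ≤ ρ v := hmax u (hmem hu)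
      rw [heq] at h1; omega
    set a₀ : α := Classical.arbitrary α with ha₀
    set A := (univ : Finset (V → α)).filter (fun f => ∀ u ∈ s, R (f u) (f (p u))) with hA
    set B := (univ : Finset (V → α)).filter
      (fun f => (∀ u ∈ s', R (f u) (f (p u))) ∧ f v = a₀) with hB
    set C := (univ : Finset (V → α)).filter (fun f => ∀ u ∈ s', R (f u) (f (p u))) with hC
    clear_value s' a₀ A B C
    have hπB : ∀ f : V → α, (∀ u ∈ s', R (f u) (f (p u))) → update f v a₀ ∈ B := by
      intro f hf
      simp only [hB, Finset.mem_filter, Finset.mem_univ, true_and]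
      refine ⟨fun u hu => ?_, update_self _ _ _⟩
      rw [update_of_ne (hne' hu), update_of_ne (hps' u hu)]
      exact hf u hu
    -- fibers over B inside C have card = card α
    have fiberC : ∀ g ∈ B, (C.filter (fun f => update f v a₀ = g)).card = Fintype.card α := by
      intro g hg
      simp only [hB, Finset.mem_filter, Finset.mem_univ, true_and] at hg
      have himg : C.filter (fun f => update f v a₀ = g)
          = (univ : Finset α).image (fun a => update g v a) := by
        ext f
        simp only [Finset.mem_filter, Finset.mem_image, Finset.mem_univ, true_and, hC]
        constructor
        · rintro ⟨hf, hfg⟩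
          refine ⟨f v, ?_⟩
          funext u
          by_cases hu : u = v
          · subst hu; simp
          · rw [update_of_ne hu]
            have := congrFun hfg u
            rw [update_of_ne hu] at this
            rw [← this]
        · rintro ⟨a, rfl⟩
          constructor
          · intro u hu
            rw [update_of_ne (hne' hu), update_of_ne (hps' u hu)]
            exact hg.1 u hu
          · funext u
            by_cases hu : u = v
            · subst hu; simp [hg.2]
            · simp [update_of_ne hu]
      rw [himg, Finset.card_image_of_injective _ (fun a b hab => by
        have := congrFun hab v; simpa using this), Finset.card_univ]
    have fiberA : ∀ g ∈ B, (A.filter (fun f => update f v a₀ = g)).card = c := by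
      intro g hg
      simp only [hB, Finset.mem_filter, Finset.mem_univ, true_and] at hg
      have himg : A.filter (fun f => update f v a₀ = g)
          = ((univ : Finset α).filter (fun a => R a (g (p v)))).image (fun a => update g v a) := by
        ext f
        simp only [Finset.mem_filter, Finset.mem_image, Finset.mem_univ, true_and, hA]
        constructor
        · rintro ⟨hf, hfg⟩
          have hfeq : f = update g v (f v) := by
            funext u
            by_cases hu : u = v
            · subst hu; simp
            · rw [update_of_ne hu]
              have := congrFun hfg u
              rw [update_of_ne hu] at this
              rw [← this]
          refine ⟨f v, ?_, hfeq.symm⟩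
          have := hf v hv
          rwa [show f (p v) = g (p v) by rw [hfeq]; rw [update_of_ne hpv]] at this
        · rintro ⟨a, haR, rfl⟩
          constructor
          · intro u hu
            by_cases huv : u = v
            · subst huv
              rw [update_self, update_of_ne hpv]
              exact haR
            · rw [update_of_ne huv, update_of_ne (hps' u (hmem2 hu huv))]
              exact hg.1 u (hmem2 hu huv)
          · funext u
            by_cases hu : u = v
            · subst hu; simp [hg.2]
            · simp [update_of_ne hu]
      rw [himg, Finset.card_image_of_injective _ (fun a b hab => by
        have := congrFun hab v; simpa using this), hc]
    have hAcard : A.card = c * B.card := by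
      rw [Finset.card_eq_sum_card_fiberwise (f := fun f => update f v a₀) (t := B)
        (fun f hf => hπB f (by
          simp only [hA, Finset.mem_coe, Finset.mem_filter, Finset.mem_univ, true_and] at hf
          exact fun u hu => hf u (hmem hu)))]
      rw [Finset.sum_congr rfl fiberA, Finset.sum_const, smul_eq_mul, mul_comm]
    have hCcard : C.card = Fintype.card α * B.card := by
      rw [Finset.card_eq_sum_card_fiberwise (f := fun f => update f v a₀) (t := B)
        (fun f hf => hπB f (by
          simp only [hC, Finset.mem_coe, Finset.mem_filter, Finset.mem_univ, true_and] at hf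
          exact hf))]
      rw [Finset.sum_congr rfl fiberC, Finset.sum_const, smul_eq_mul, mul_comm]
    have IH' := IH s' hss' (fun u hu => hs u (hmem hu))
    have hscard : s.card = s'.card + 1 := by
      rw [hs', Finset.card_erase_of_mem hv]
      exact (Nat.succ_pred_eq_of_pos (Finset.card_pos.mpr hne)).symm
    rw [← hC] at IH'
    simp only [hscard, pow_succ, hAcard]
    calc c * B.card * (Fintype.card α ^ s'.card * Fintype.card α)
        = c * ((Fintype.card α * B.card) * Fintype.card α ^ s'.card) := by ring
      _ = c * (C.card * Fintype.card α ^ s'.card) := by rw [hCcard]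
      _ = c * (c ^ s'.card * Fintype.card α ^ Fintype.card V) := by rw [IH']
      _ = c ^ s'.card * c * Fintype.card α ^ Fintype.card V := by ring

lemma keyring_count {P K : ℕ} (A : Finset (Fin P)) (hA : A.card = K) :
    ((univ : Finset (KeyRing P K)).filter (fun S => (S.1 ∩ A).Nonempty)).card
      = P.choose K - (P - K).choose K := by
  classical
  classical
  have htot : (univ : Finset (KeyRing P K)).card = P.choose K := by
    rw [Finset.card_univ]
    simpa using Fintype.card_finset_len (α := Fin P) K
  have hneg : ((univ : Finset (KeyRing P K)).filter
      (fun S => ¬(S.1 ∩ A).Nonempty)).card = (P - K).choose K := by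
    have : ((univ : Finset (KeyRing P K)).filter
        (fun S => ¬(S.1 ∩ A).Nonempty)).card
        = (Finset.powersetCard K Aᶜ).card := by
      apply Finset.card_bij (fun S _ => S.1)
      · intro S hS
        simp only [Finset.mem_filter, Finset.not_nonempty_iff_eq_empty] at hS
        rw [Finset.mem_powersetCard]
        refine ⟨?_, S.2⟩
        intro x hx
        simp only [Finset.mem_compl]
        intro hxA
        have : x ∈ S.1 ∩ A := Finset.mem_inter.mpr ⟨hx, hxA⟩
        rw [hS.2] at this
        exact absurd this (Finset.notMem_empty x)
      · intro S _ S' _ h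
        exact Subtype.ext h
      · intro B hB
        rw [Finset.mem_powersetCard] at hB
        refine ⟨⟨B, hB.2⟩, ?_, rfl⟩
        simp only [Finset.mem_filter, Finset.mem_univ, true_and,
          Finset.not_nonempty_iff_eq_empty]
        rw [← Finset.disjoint_iff_inter_eq_empty]
        exact Finset.disjoint_left.mpr (fun x hx hxA => by
          have := hB.1 hx; rw [Finset.mem_compl] at this; exact this hxA)
    rw [this, Finset.card_powersetCard, Finset.card_compl, hA, Fintype.card_fin]
  have hsplit := Finset.card_filter_add_card_filter_not
    (s := (univ : Finset (KeyRing P K)))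
    (p := fun S => (S.1 ∩ A).Nonempty)
  have hle : (P - K).choose K ≤ P.choose K := Nat.choose_le_choose K (Nat.sub_le P K)
  omega

lemma exists_parent {r : ℕ} {T : SimpleGraph (Fin r)} (hc : T.Connected)
    (v0 v : Fin r) (h : v ≠ v0) :
    ∃ u, T.Adj u v ∧ T.dist v0 u + 1 = T.dist v0 v := by
  obtain ⟨w, hw⟩ := hc.exists_walk_length_eq_dist v v0
  cases w with
  | nil => exact absurd rfl h
  | cons hadj q =>
    rename_i u
    refine ⟨u, hadj.symm, ?_⟩
    have h1 : T.dist v0 u ≤ q.length := by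
      have := T.dist_le q.reverse
      rwa [SimpleGraph.Walk.length_reverse] at this
    have h2 : T.dist v0 v ≤ T.dist v0 u + T.dist u v :=
      hc.dist_triangle
    have h3 : T.dist u v = 1 := SimpleGraph.dist_eq_one_iff_adj.mpr hadj.symm
    have h4 : T.dist v0 v = q.length + 1 := by
      rw [SimpleGraph.dist_comm]
      rw [← hw]
      simp [SimpleGraph.Walk.length_cons]
    omega

/-- The probability that a given spanning tree `T` on the vertices `{1,…,r}`
is present in the random key graph equals `(1-q)^(r-1)`, where
`q = C(P-K, K)/C(P, K)`. -/
theorem stmt7 (n P K r : ℕ) (hK : 0 < K) (h2K : 2 * K ≤ P)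
    (hr2 : 2 ≤ r) (hrn : r ≤ n)
    (T : SimpleGraph (Fin r)) (hT : T.IsTree) :
    pr n P K (fun κ => ∀ i j : Fin r, T.Adj i j →
        ((κ (Fin.castLE hrn i)).1 ∩ (κ (Fin.castLE hrn j)).1).Nonempty) =
      (1 - ((P - K).choose K : ℝ) / (P.choose K : ℝ)) ^ (r - 1) := by
  classical
  set M := P.choose K with hMdef
  set D := (P - K).choose K with hDdef
  have hKP : K ≤ P := le_trans (by omega) h2K
  have hM : 0 < M := Nat.choose_pos hKP
  have hDM : D ≤ M := Nat.choose_le_choose K (Nat.sub_le P K)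
  have hNE : Nonempty (KeyRing P K) := by
    obtain ⟨t, _, ht⟩ := Finset.exists_subset_card_eq (s := (univ : Finset (Fin P))) (n := K)
      (by simpa using hKP)
    exact ⟨⟨t, ht⟩⟩
  have h0r : 0 < r := by omega
  set v0 : Fin r := ⟨0, h0r⟩ with hv0def
  have hconn : T.Connected := hT.isConnected
  have hpar : ∀ v : Fin r, ∃ u, v ≠ v0 →
      (T.Adj u v ∧ T.dist v0 u + 1 = T.dist v0 v) := by
    intro v
    by_cases h : v = v0
    · exact ⟨v0, fun h' => absurd h h'⟩
    · obtain ⟨u, hu⟩ := exists_parent hconn v0 v h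
      exact ⟨u, fun _ => hu⟩
  choose p hp using hpar
  -- the edges of `T` are exactly the pairs `(v, p v)` for `v ≠ v0`
  have hSsub : (univ.filter (fun v : Fin r => v ≠ v0)).image (fun v => s(v, p v))
      ⊆ T.edgeFinset := by
    intro e he
    simp only [Finset.mem_image, Finset.mem_filter, Finset.mem_univ, true_and] at he
    obtain ⟨v, hv, rfl⟩ := he
    rw [SimpleGraph.mem_edgeFinset]
    exact (hp v hv).1.symm
  have hinj : Set.InjOn (fun v => s(v, p v))
      ((univ.filter (fun v : Fin r => v ≠ v0)) : Finset (Fin r)) := by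
    intro a ha b hb hab
    simp only [Finset.coe_filter, Set.mem_setOf_eq, Finset.mem_univ, true_and] at ha hb
    simp only [Sym2.eq_iff] at hab
    rcases hab with ⟨rfl, -⟩ | ⟨h1, h2⟩
    · rfl
    · exfalso
      have da := (hp a ha).2
      have db := (hp b hb).2
      rw [h2] at da
      rw [← h1] at db
      omega
  have hcardS : ((univ.filter (fun v : Fin r => v ≠ v0)).image
      (fun v => s(v, p v))).card = r - 1 := by
    rw [Finset.card_image_of_injOn hinj, Finset.filter_ne',
      Finset.card_erase_of_mem (Finset.mem_univ _), Finset.card_univ, Fintype.card_fin]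
  have hScover : (univ.filter (fun v : Fin r => v ≠ v0)).image (fun v => s(v, p v))
      = T.edgeFinset := by
    apply Finset.eq_of_subset_of_card_le hSsub
    have h1 := hT.card_edgeFinset
    rw [Fintype.card_fin] at h1
    omega
  have hedge : ∀ i j, T.Adj i j →
      ∃ v, v ≠ v0 ∧ ((v = i ∧ p v = j) ∨ (v = j ∧ p v = i)) := by
    intro i j hij
    have hmem : s(i, j) ∈ T.edgeFinset := SimpleGraph.mem_edgeFinset.mpr hij
    rw [← hScover] at hmem
    simp only [Finset.mem_image, Finset.mem_filter, Finset.mem_univ, true_and] at hmem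
    obtain ⟨v, hv, he⟩ := hmem
    rw [Sym2.eq_iff] at he
    exact ⟨v, hv, he⟩
  -- transfer to `Fin n`
  set p' : Fin n → Fin n := fun w =>
    if h : (w : ℕ) < r then Fin.castLE hrn (p ⟨w, h⟩) else w with hp'def
  set ρ' : Fin n → ℕ := fun w =>
    if h : (w : ℕ) < r then T.dist v0 ⟨w, h⟩ else 0 with hρ'def
  set s : Finset (Fin n) :=
    (univ.filter (fun v : Fin r => v ≠ v0)).image (Fin.castLE hrn) with hsdef
  have hp'c : ∀ v : Fin r, p' (Fin.castLE hrn v) = Fin.castLE hrn (p v) := by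
    intro v
    have hvr : ((Fin.castLE hrn v : Fin n) : ℕ) < r := v.isLt
    rw [hp'def]
    simp only
    rw [dif_pos hvr]
    have hv' : (⟨((Fin.castLE hrn v : Fin n) : ℕ), hvr⟩ : Fin r) = v := Fin.ext rfl
    rw [hv']
  have hρ'c : ∀ v : Fin r, ρ' (Fin.castLE hrn v) = T.dist v0 v := by
    intro v
    have hvr : ((Fin.castLE hrn v : Fin n) : ℕ) < r := v.isLt
    rw [hρ'def]
    simp only
    rw [dif_pos hvr]
    have hv' : (⟨((Fin.castLE hrn v : Fin n) : ℕ), hvr⟩ : Fin r) = v := Fin.ext rfl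
    rw [hv']
  have hrank : ∀ w ∈ s, ρ' (p' w) < ρ' w := by
    intro w hw
    rw [hsdef] at hw
    simp only [Finset.mem_image, Finset.mem_filter, Finset.mem_univ, true_and] at hw
    obtain ⟨v, hv, rfl⟩ := hw
    rw [hp'c, hρ'c, hρ'c]
    have := (hp v hv).2
    omega
  set R : KeyRing P K → KeyRing P K → Prop := fun a b => (a.1 ∩ b.1).Nonempty with hRdef
  have hcR : ∀ a : KeyRing P K, (univ.filter (fun b => R b a)).card = M - D :=
    fun a => keyring_count a.1 a.2
  have main := count_constraints R (M - D) hcR p' ρ' s hrank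
  -- identify the event with the constraint set
  have hEq : ∀ κ : Fin n → KeyRing P K,
      (∀ i j : Fin r, T.Adj i j →
          ((κ (Fin.castLE hrn i)).1 ∩ (κ (Fin.castLE hrn j)).1).Nonempty)
      ↔ ∀ w ∈ s, R (κ w) (κ (p' w)) := by
    intro κ
    constructor
    · intro hE w hw
      rw [hsdef] at hw
      simp only [Finset.mem_image, Finset.mem_filter, Finset.mem_univ, true_and] at hw
      obtain ⟨v, hv, rfl⟩ := hw
      rw [hp'c]
      exact hE v (p v) (hp v hv).1.symm
    · intro hR i j hij
      obtain ⟨v, hv, hcase⟩ := hedge i j hij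
      have hv' := hR (Fin.castLE hrn v) (by
        rw [hsdef]
        simp only [Finset.mem_image, Finset.mem_filter, Finset.mem_univ, true_and]
        exact ⟨v, hv, rfl⟩)
      rw [hp'c] at hv'
      have hv'' : ((κ (Fin.castLE hrn v)).1 ∩ (κ (Fin.castLE hrn (p v))).1).Nonempty := hv'
      rcases hcase with ⟨rfl, rfl⟩ | ⟨rfl, rfl⟩
      · exact hv''
      · rwa [Finset.inter_comm] at hv''
  have hKRcard : Fintype.card (KeyRing P K) = M := by
    rw [hMdef]
    simpa using Fintype.card_finset_len (α := Fin P) K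
  have hscard : s.card = r - 1 := by
    rw [hsdef, Finset.card_image_of_injective _ (Fin.castLE_injective hrn),
      Finset.filter_ne', Finset.card_erase_of_mem (Finset.mem_univ _),
      Finset.card_univ, Fintype.card_fin]
  rw [hKRcard, hscard, Fintype.card_fin] at main
  -- final arithmetic
  have key : ∀ (inst : DecidablePred (fun κ : Fin n → KeyRing P K =>
      ∀ i j : Fin r, T.Adj i j →
        ((κ (Fin.castLE hrn i)).1 ∩ (κ (Fin.castLE hrn j)).1).Nonempty)),
      (@Finset.filter _ _ inst Finset.univ).card * M ^ (r - 1)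
        = (M - D) ^ (r - 1) * M ^ n := by
    intro inst
    exact Eq.trans (congrArg (· * M ^ (r - 1))
      (my_filter_card_congr _ _ inst _ _ (fun κ _ => hEq κ))) main
  simp only [pr]
  rw [Fintype.card_fun, hKRcard, Fintype.card_fin]
  have hMR : (M : ℝ) ≠ 0 := Nat.cast_ne_zero.mpr hM.ne'
  have hq : (1 : ℝ) - (D : ℝ) / (M : ℝ) = ((M - D : ℕ) : ℝ) / (M : ℝ) := by
    rw [Nat.cast_sub hDM, sub_div, div_self hMR]
  rw [hq, div_pow, Nat.cast_pow]
  rw [div_eq_div_iff (pow_ne_zero _ hMR) (pow_ne_zero _ hMR)]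
  exact_mod_cast key _
end

section
/- In the random key graph K(n; K, P) with 2K ≤ P, for each r = 2,…,n, the probability that the induced subgraph on vertices {1,…,r} is connected is at most r^{r-2} (1 - q)^{r-1}, where q = C(P-K, K)/C(P, K). -/
open Finset

namespace RKGaux

set_option linter.unusedSectionVars false
set_option linter.unusedVariables false

variable {α : Type*} [LinearOrder α] [DecidableEq α]

def Con (E : Finset (Sym2 α)) : α → α → Prop :=
  Relation.ReflTransGen fun a b => s(a, b) ∈ E

def degE (E : Finset (Sym2 α)) (v : α) : ℕ := #(E.filter fun e => v ∈ e)

def IsTreeOn (V : Finset α) (E : Finset (Sym2 α)) : Prop :=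
  (∀ e ∈ E, ∀ x ∈ e, x ∈ V) ∧ (∀ e ∈ E, ¬ e.IsDiag) ∧ #E + 1 = #V ∧
    ∀ x ∈ V, ∀ y ∈ V, Con E x y

theorem Con.mono {E E' : Finset (Sym2 α)} (h : E ⊆ E') {x y : α} (hc : Con E x y) :
    Con E' x y := Relation.ReflTransGen.mono (fun _ _ hab => h hab) _ _ hc

theorem Con.symm {E : Finset (Sym2 α)} {x y : α} (hc : Con E x y) : Con E y x :=
  by
    haveI : Std.Symm (fun a b : α => s(a, b) ∈ E) := ⟨fun a b hab => by rwa [Sym2.eq_swap]⟩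
    exact Std.Symm.symm (r := Relation.ReflTransGen (fun a b : α => s(a, b) ∈ E)) _ _ hc

theorem Con.trans {E : Finset (Sym2 α)} {x y z : α} (h1 : Con E x y) (h2 : Con E y z) :
    Con E x z := Relation.ReflTransGen.trans h1 h2

theorem one_le_degE {V : Finset α} {E : Finset (Sym2 α)} (hT : IsTreeOn V E)
    (h2 : 2 ≤ #V) {v : α} (hv : v ∈ V) : 1 ≤ degE E v := by
  obtain ⟨y, hy, hyv⟩ : ∃ y ∈ V, y ≠ v := by
    obtain ⟨a, ha, b, hb, hab⟩ := Finset.one_lt_card.mp h2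
    rcases eq_or_ne a v with rfl | h
    · exact ⟨b, hb, fun hbv => hab hbv.symm⟩
    · exact ⟨a, ha, h⟩
  have hc : Con E v y := hT.2.2.2 v hv y hy
  rcases Relation.ReflTransGen.cases_head hc with h | ⟨c, hstep, -⟩
  · exact absurd h.symm hyv
  · have : s(v, c) ∈ E.filter fun e => v ∈ e :=
      Finset.mem_filter.mpr ⟨hstep, Sym2.mem_mk_left _ _⟩
    exact Finset.card_pos.mpr ⟨_, this⟩

theorem sum_degE_le {V : Finset α} {E : Finset (Sym2 α)} :
    ∑ v ∈ V, degE E v ≤ 2 * #E := by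
  classical
  have h1 : ∑ v ∈ V, degE E v = ∑ e ∈ E, #(V.filter fun v => v ∈ e) := by
    simp only [degE, Finset.card_filter]
    rw [Finset.sum_comm]
  have h2 : ∀ e ∈ E, #(V.filter fun v => v ∈ e) ≤ 2 := by
    intro e _
    induction e with
    | _ a b =>
      refine le_trans (Finset.card_le_card (fun x hx => ?_))
        ((Finset.card_insert_le a {b}).trans (by simp))
      rcases Sym2.mem_iff.mp (Finset.mem_filter.mp hx).2 with rfl | rfl
      · exact Finset.mem_insert_self _ _
      · exact Finset.mem_insert_of_mem (Finset.mem_singleton_self _)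
  calc ∑ v ∈ V, degE E v = ∑ e ∈ E, #(V.filter fun v => v ∈ e) := h1
    _ ≤ ∑ _e ∈ E, 2 := Finset.sum_le_sum h2
    _ = 2 * #E := by rw [Finset.sum_const, smul_eq_mul, mul_comm]

theorem exists_leaf {V : Finset α} {E : Finset (Sym2 α)} (hT : IsTreeOn V E)
    (h2 : 2 ≤ #V) : ∃ ℓ ∈ V, degE E ℓ = 1 := by
  by_contra hno
  push_neg at hno
  have h1 : ∀ v ∈ V, 2 ≤ degE E v := fun v hv => by
    have := one_le_degE hT h2 hv
    have := hno v hv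
    omega
  have hlow : 2 * #V ≤ ∑ v ∈ V, degE E v := by
    calc 2 * #V = ∑ _v ∈ V, 2 := by rw [Finset.sum_const, smul_eq_mul, mul_comm]
    _ ≤ _ := Finset.sum_le_sum h1
  have h3 := sum_degE_le (V := V) (E := E)
  have hcard := hT.2.2.1
  omega

theorem leaf_edge {V : Finset α} {E : Finset (Sym2 α)} (hT : IsTreeOn V E)
    {ℓ : α} (hℓV : ℓ ∈ V) (hd : degE E ℓ = 1) :
    ∃ p, p ≠ ℓ ∧ p ∈ V ∧ s(ℓ, p) ∈ E ∧ E.filter (fun e => ℓ ∈ e) = {s(ℓ, p)} := by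
  classical
  obtain ⟨e₀, he₀⟩ := Finset.card_eq_one.mp hd
  have he₀E : e₀ ∈ E.filter fun e => ℓ ∈ e := by rw [he₀]; exact Finset.mem_singleton_self _
  have he₀E' := Finset.mem_filter.mp he₀E
  set p := Sym2.Mem.other he₀E'.2 with hp
  have hspec : s(ℓ, p) = e₀ := Sym2.other_spec he₀E'.2
  refine ⟨p, ?_, ?_, by rw [hspec]; exact he₀E'.1, by rw [hspec]; exact he₀⟩
  · intro hpe
    exact hT.2.1 e₀ he₀E'.1 (by rw [← hspec, hpe]; exact Sym2.mk_isDiag_iff.mpr rfl)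
  · exact hT.1 e₀ he₀E'.1 p (by rw [← hspec]; exact Sym2.mem_mk_right _ _)

theorem notMem_of_erase {E : Finset (Sym2 α)} {ℓ p : α}
    (hfil : E.filter (fun e => ℓ ∈ e) = {s(ℓ, p)}) :
    ∀ e ∈ E.erase s(ℓ, p), ℓ ∉ e := by
  classical
  intro e he hle
  have : e ∈ E.filter fun e => ℓ ∈ e :=
    Finset.mem_filter.mpr ⟨Finset.mem_of_mem_erase he, hle⟩
  rw [hfil, Finset.mem_singleton] at this
  exact (Finset.ne_of_mem_erase he) this

theorem con_erase {E : Finset (Sym2 α)} {ℓ p : α} (hpℓ : p ≠ ℓ)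
    (hfil : E.filter (fun e => ℓ ∈ e) = {s(ℓ, p)}) {x y : α} (hc : Con E x y) :
    Con (E.erase s(ℓ, p)) (if x = ℓ then p else x) (if y = ℓ then p else y) := by
  classical
  set f : α → α := fun v => if v = ℓ then p else v with hf
  induction hc with
  | refl => exact Relation.ReflTransGen.refl
  | tail hab hstep ih =>
    rename_i b c
    by_cases hbc : s(b, c) = s(ℓ, p)
    · rcases Sym2.eq_iff.mp hbc with ⟨rfl, rfl⟩ | ⟨rfl, rfl⟩
      · simpa using ih
      · simpa [hpℓ] using ih
    · have hbℓ : b ≠ ℓ := by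
        intro rfl'
        apply hbc
        have : s(b, c) ∈ E.filter fun e => b ∈ e :=
          Finset.mem_filter.mpr ⟨hstep, Sym2.mem_mk_left _ _⟩
        rw [rfl'] at this ⊢
        rw [hfil, Finset.mem_singleton] at this
        exact this
      have hcℓ : c ≠ ℓ := by
        intro rfl'
        apply hbc
        have : s(b, c) ∈ E.filter fun e => c ∈ e :=
          Finset.mem_filter.mpr ⟨hstep, Sym2.mem_mk_right _ _⟩
        rw [rfl'] at this ⊢
        rw [hfil, Finset.mem_singleton] at this
        exact this
      refine Relation.ReflTransGen.tail ih ?_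
      show s(f b, f c) ∈ _
      rw [show f b = b by simp [hf, hbℓ], show f c = c by simp [hf, hcℓ]]
      exact Finset.mem_erase.mpr ⟨hbc, hstep⟩

theorem tree_erase_leaf {V : Finset α} {E : Finset (Sym2 α)} (hT : IsTreeOn V E)
    {ℓ p : α} (hℓV : ℓ ∈ V) (hpℓ : p ≠ ℓ) (hE0 : s(ℓ, p) ∈ E)
    (hfil : E.filter (fun e => ℓ ∈ e) = {s(ℓ, p)}) :
    IsTreeOn (V.erase ℓ) (E.erase s(ℓ, p)) := by
  classical
  obtain ⟨hV, hdiag, hcard, hcon⟩ := hT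
  refine ⟨?_, ?_, ?_, ?_⟩
  · intro e he x hx
    refine Finset.mem_erase.mpr ⟨?_, hV e (Finset.mem_of_mem_erase he) x hx⟩
    intro hxx
    exact notMem_of_erase hfil e he (hxx ▸ hx)
  · exact fun e he => hdiag e (Finset.mem_of_mem_erase he)
  · rw [Finset.card_erase_of_mem hE0, Finset.card_erase_of_mem hℓV]
    have : 1 ≤ #E := Finset.card_pos.mpr ⟨_, hE0⟩
    omega
  · intro x hx y hy
    have hx' := Finset.mem_erase.mp hx
    have hy' := Finset.mem_erase.mp hy
    have := con_erase hpℓ hfil (hcon x hx'.2 y hy'.2)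
    rwa [if_neg hx'.1, if_neg hy'.1] at this

theorem degE_erase_of_notMem {E : Finset (Sym2 α)} {e₀ : Sym2 α} {v : α} (hv : v ∉ e₀) :
    degE (E.erase e₀) v = degE E v := by
  classical
  unfold degE
  congr 1
  rw [Finset.filter_erase]
  exact Finset.erase_eq_of_notMem (by simp [hv])

theorem degE_erase_of_mem {E : Finset (Sym2 α)} {e₀ : Sym2 α} (he₀ : e₀ ∈ E) {v : α}
    (hv : v ∈ e₀) : degE (E.erase e₀) v + 1 = degE E v := by
  classical
  unfold degE
  rw [Finset.filter_erase, Finset.card_erase_of_mem (Finset.mem_filter.mpr ⟨he₀, hv⟩)]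
  have : 1 ≤ #(E.filter fun e => v ∈ e) := Finset.card_pos.mpr ⟨e₀, Finset.mem_filter.mpr ⟨he₀, hv⟩⟩
  omega
noncomputable def code : ℕ → Finset α → Finset (Sym2 α) → List α
  | 0, _, _ => []
  | (fuel+1), V, E =>
    if h3 : 2 < #V then
      if hL : (V.filter fun v => degE E v = 1).Nonempty then
        let ℓ := (V.filter fun v => degE E v = 1).max' hL
        if he : (E.filter fun e => ℓ ∈ e).Nonempty then
          let e₀ := he.choose
          have hmem : ℓ ∈ e₀ := (Finset.mem_filter.mp he.choose_spec).2
          Sym2.Mem.other hmem :: code fuel (V.erase ℓ) (E.erase e₀)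
        else []
      else []
    else []

theorem other_eq_of {e : Sym2 α} {x y : α} (h : x ∈ e) (he : e = s(x, y)) (hyx : y ≠ x) :
    Sym2.Mem.other h = y := by
  subst he
  rcases Sym2.eq_iff.mp (Sym2.other_spec h) with ⟨-, h2⟩ | ⟨h1, -⟩
  · exact h2
  · exact absurd h1.symm hyx

theorem code_succ {V : Finset α} {E : Finset (Sym2 α)} (hT : IsTreeOn V E)
    (h3 : 2 < #V) (fuel : ℕ) :
    ∃ ℓ p, ℓ ∈ V ∧ degE E ℓ = 1 ∧ (∀ v ∈ V, degE E v = 1 → v ≤ ℓ) ∧ p ≠ ℓ ∧ p ∈ V ∧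
      s(ℓ, p) ∈ E ∧ E.filter (fun e => ℓ ∈ e) = {s(ℓ, p)} ∧
      code (fuel+1) V E = p :: code fuel (V.erase ℓ) (E.erase s(ℓ, p)) := by
  classical
  have hLne : (V.filter fun v => degE E v = 1).Nonempty := by
    obtain ⟨ℓ, h1, h2⟩ := exists_leaf hT (by omega)
    exact ⟨ℓ, Finset.mem_filter.mpr ⟨h1, h2⟩⟩
  have hℓL := (V.filter fun v => degE E v = 1).max'_mem hLne
  have hℓV : (V.filter fun v => degE E v = 1).max' hLne ∈ V := (Finset.mem_filter.mp hℓL).1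
  have hdeg : degE E ((V.filter fun v => degE E v = 1).max' hLne) = 1 :=
    (Finset.mem_filter.mp hℓL).2
  obtain ⟨p, hpℓ, hpV, hpE, hfil⟩ := leaf_edge hT hℓV hdeg
  refine ⟨_, p, hℓV, hdeg, ?_, hpℓ, hpV, hpE, hfil, ?_⟩
  · intro v hv hdv
    exact Finset.le_max' _ v (Finset.mem_filter.mpr ⟨hv, hdv⟩)
  · simp only [code, dif_pos h3, dif_pos hLne]
    split
    · next he' =>
        have hch : he'.choose = s((V.filter fun v => degE E v = 1).max' hLne, p) := by
          have h2 := he'.choose_spec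
          exact Finset.mem_singleton.mp ((Finset.ext_iff.mp hfil _).mp h2)
        congr 1
        · exact other_eq_of _ hch hpℓ
        · rw [hch]
    · next he' =>
        exact absurd (by rw [hfil]; exact ⟨_, Finset.mem_singleton_self _⟩) he'

theorem tree_two {V : Finset α} {E : Finset (Sym2 α)} (hT : IsTreeOn V E)
    {a b : α} (hab : a ≠ b) (hV : V = {a, b}) : E = {s(a, b)} := by
  classical
  have hE1 : #E = 1 := by
    have := hT.2.2.1
    rw [hV, Finset.card_insert_of_notMem (by simp [hab]), Finset.card_singleton] at this
    omega
  obtain ⟨e, he⟩ := Finset.card_eq_one.mp hE1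
  have heE : e ∈ E := by rw [he]; exact Finset.mem_singleton_self _
  rw [he]
  congr 1
  induction e with
  | _ x y =>
    have hx : x ∈ V := hT.1 _ heE x (Sym2.mem_mk_left _ _)
    have hy : y ∈ V := hT.1 _ heE y (Sym2.mem_mk_right _ _)
    have hxy : x ≠ y := fun h => hT.2.1 _ heE (by rw [h]; exact Sym2.mk_isDiag_iff.mpr rfl)
    rw [hV] at hx hy
    simp only [Finset.mem_insert, Finset.mem_singleton] at hx hy
    rcases hx with rfl | rfl
    · rcases hy with rfl | rfl
      · exact absurd rfl hxy
      · rfl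
    · rcases hy with rfl | rfl
      · exact Sym2.eq_swap
      · exact absurd rfl hxy
theorem code_of_le_two {V : Finset α} {E : Finset (Sym2 α)} (h : ¬ 2 < #V) :
    ∀ fuel, code fuel V E = []
  | 0 => rfl
  | (fuel+1) => by simp [code, h]

theorem degE_of_card_two {V : Finset α} {E : Finset (Sym2 α)} (hT : IsTreeOn V E)
    (h2 : #V = 2) {v : α} (hv : v ∈ V) : degE E v = 1 := by
  classical
  obtain ⟨a, b, hab, hVab⟩ := Finset.card_eq_two.mp h2
  have hE := tree_two hT hab hVab
  rw [hVab] at hv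
  simp only [Finset.mem_insert, Finset.mem_singleton] at hv
  have hvm : v ∈ s(a, b) := by
    rcases hv with rfl | rfl
    · exact Sym2.mem_mk_left _ _
    · exact Sym2.mem_mk_right _ _
  rw [hE]
  unfold degE
  rw [Finset.filter_singleton, if_pos hvm, Finset.card_singleton]

theorem code_sub : ∀ (fuel : ℕ) {V : Finset α} {E : Finset (Sym2 α)}, IsTreeOn V E →
    ∀ v ∈ code fuel V E, v ∈ V
  | 0, _, _, _, _, hv => absurd hv (List.not_mem_nil)
  | (fuel+1), V, E, hT, v, hv => by
    by_cases h3 : 2 < #V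
    · obtain ⟨ℓ, p, hℓV, hdeg, hmax, hpℓ, hpV, hpE, hfil, hcode⟩ := code_succ hT h3 fuel
      rw [hcode] at hv
      rcases List.mem_cons.mp hv with rfl | hv'
      · exact hpV
      · exact Finset.mem_of_mem_erase
          (code_sub fuel (tree_erase_leaf hT hℓV hpℓ hpE hfil) v hv')
    · rw [code_of_le_two h3] at hv
      exact absurd hv (List.not_mem_nil)

theorem code_length : ∀ (fuel : ℕ) {V : Finset α} {E : Finset (Sym2 α)}, IsTreeOn V E →
    2 ≤ #V → #V ≤ fuel + 2 → (code fuel V E).length + 2 = #V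
  | 0, V, E, hT, h2, hle => by
    have : #V = 2 := by omega
    rw [code_of_le_two (by omega)]
    simpa using this.symm
  | (fuel+1), V, E, hT, h2, hle => by
    by_cases h3 : 2 < #V
    · obtain ⟨ℓ, p, hℓV, hdeg, hmax, hpℓ, hpV, hpE, hfil, hcode⟩ := code_succ hT h3 fuel
      rw [hcode]
      have hT' := tree_erase_leaf hT hℓV hpℓ hpE hfil
      have hcard : #(V.erase ℓ) = #V - 1 := Finset.card_erase_of_mem hℓV
      have := code_length fuel hT' (by omega) (by omega)
      simp only [List.length_cons]
      omega
    · rw [code_of_le_two h3]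
      have : #V = 2 := by omega
      simpa using this.symm

theorem two_le_degE_parent {V : Finset α} {E : Finset (Sym2 α)} (hT : IsTreeOn V E)
    (h3 : 2 < #V) {ℓ p : α} (hℓV : ℓ ∈ V) (hpV : p ∈ V) (hpℓ : p ≠ ℓ)
    (hpE : s(ℓ, p) ∈ E) (hfil : E.filter (fun e => ℓ ∈ e) = {s(ℓ, p)}) :
    2 ≤ degE E p := by
  classical
  by_contra hlt
  have hmemp : s(ℓ, p) ∈ E.filter fun e => p ∈ e :=
    Finset.mem_filter.mpr ⟨hpE, Sym2.mem_mk_right _ _⟩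
  have hdegp : degE E p = 1 := by
    have h1 : 1 ≤ degE E p := Finset.card_pos.mpr ⟨_, hmemp⟩
    unfold degE at hlt h1 ⊢
    omega
  have hfilp : E.filter (fun e => p ∈ e) = {s(ℓ, p)} := by
    obtain ⟨e, he⟩ := Finset.card_eq_one.mp hdegp
    rw [he] at hmemp ⊢
    rw [Finset.mem_singleton] at hmemp
    rw [hmemp]
  have key : ∀ a z, Con E a z → (a = ℓ ∨ a = p) → (z = ℓ ∨ z = p) := by
    intro a z hc
    induction hc with
    | refl => exact id
    | tail hab hstep ih =>
      rename_i b c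
      intro ha
      have hb := ih ha
      have hbc : s(b, c) = s(ℓ, p) := by
        rcases hb with rfl | rfl
        · exact Finset.mem_singleton.mp ((Finset.ext_iff.mp hfil _).mp
            (Finset.mem_filter.mpr ⟨hstep, Sym2.mem_mk_left _ _⟩))
        · exact Finset.mem_singleton.mp ((Finset.ext_iff.mp hfilp _).mp
            (Finset.mem_filter.mpr ⟨hstep, Sym2.mem_mk_left _ _⟩))
      rcases Sym2.eq_iff.mp hbc with ⟨-, rfl⟩ | ⟨-, rfl⟩
      · exact Or.inr rfl
      · exact Or.inl rfl
  obtain ⟨z, hz⟩ : ((V.erase ℓ).erase p).Nonempty := by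
    apply Finset.card_pos.mp
    have hp' : p ∈ V.erase ℓ := Finset.mem_erase.mpr ⟨hpℓ, hpV⟩
    rw [Finset.card_erase_of_mem hp', Finset.card_erase_of_mem hℓV]
    omega
  have hz1 := Finset.mem_erase.mp hz
  have hz2 := Finset.mem_erase.mp hz1.2
  rcases key ℓ z (hT.2.2.2 ℓ hℓV z hz2.2) (Or.inl rfl) with h | h
  · exact hz2.1 h
  · exact hz1.1 h

theorem code_mem_iff : ∀ (fuel : ℕ) {V : Finset α} {E : Finset (Sym2 α)}, IsTreeOn V E →
    V.card ≤ fuel + 2 → ∀ v ∈ V, (v ∈ code fuel V E ↔ 2 ≤ degE E v)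
  | fuel, V, E, hT, hle, v, hv => by
    by_cases h3 : 2 < #V
    · cases fuel with
      | zero => omega
      | succ fuel =>
        obtain ⟨ℓ, p, hℓV, hdeg, hmax, hpℓ, hpV, hpE, hfil, hcode⟩ := code_succ hT h3 fuel
        have hT' := tree_erase_leaf hT hℓV hpℓ hpE hfil
        rw [hcode]
        rcases eq_or_ne v ℓ with rfl | hvℓ
        · constructor
          · intro hmem
            rcases List.mem_cons.mp hmem with h | h
            · exact absurd h.symm hpℓ
            · exact absurd (Finset.mem_erase.mp (code_sub fuel hT' v h)).1 (fun hne => hne rfl)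
          · intro h2d
            rw [hdeg] at h2d
            omega
        · rcases eq_or_ne v p with rfl | hvp
          · constructor
            · intro _; exact two_le_degE_parent hT h3 hℓV hpV hpℓ hpE hfil
            · intro _; exact List.mem_cons_self
          · have hv' : v ∈ V.erase ℓ := Finset.mem_erase.mpr ⟨hvℓ, hv⟩
            have hcard : #(V.erase ℓ) = #V - 1 := Finset.card_erase_of_mem hℓV
            have ih := code_mem_iff fuel hT' (by omega) v hv'
            have hdeq : degE (E.erase s(ℓ, p)) v = degE E v :=
              degE_erase_of_notMem (by
                intro hm
                rcases Sym2.mem_iff.mp hm with rfl | rfl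
                · exact hvℓ rfl
                · exact hvp rfl)
            rw [hdeq] at ih
            rw [List.mem_cons]
            constructor
            · intro h
              rcases h with rfl | h
              · exact absurd rfl hvp
              · exact ih.mp h
            · intro h
              exact Or.inr (ih.mpr h)
    · rw [code_of_le_two h3]
      have h1V : 1 ≤ #V := Finset.card_pos.mpr ⟨v, hv⟩
      have hdle : degE E v ≤ 1 := by
        rcases (by omega : #V = 1 ∨ #V = 2) with h | h
        · have hE : E = ∅ := Finset.card_eq_zero.mp (by have := hT.2.2.1; omega)
          simp [degE, hE]
        · have := degE_of_card_two hT h hv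
          omega
      simp only [List.not_mem_nil, false_iff]
      omega
theorem code_inj : ∀ (fuel : ℕ) {V : Finset α} {E₁ E₂ : Finset (Sym2 α)},
    IsTreeOn V E₁ → IsTreeOn V E₂ → 2 ≤ #V → #V ≤ fuel + 2 →
    code fuel V E₁ = code fuel V E₂ → E₁ = E₂ := by
  intro fuel
  induction fuel with
  | zero =>
    intro V E₁ E₂ hT1 hT2 h2 hle _
    obtain ⟨a, b, hab, hVab⟩ := Finset.card_eq_two.mp (show #V = 2 by omega)
    rw [tree_two hT1 hab hVab, tree_two hT2 hab hVab]
  | succ fuel ih =>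
    intro V E₁ E₂ hT1 hT2 h2 hle hcode
    have hcodeOrig := hcode
    by_cases h3 : 2 < #V
    · obtain ⟨ℓ₁, p₁, hℓV₁, hdeg₁, hmax₁, hpℓ₁, hpV₁, hpE₁, hfil₁, hcode₁⟩ :=
        code_succ hT1 h3 fuel
      obtain ⟨ℓ₂, p₂, hℓV₂, hdeg₂, hmax₂, hpℓ₂, hpV₂, hpE₂, hfil₂, hcode₂⟩ :=
        code_succ hT2 h3 fuel
      rw [hcode₁, hcode₂] at hcode
      injection hcode with hp hc
      have hdiff : ∀ v ∈ V, (degE E₁ v = 1 ↔ degE E₂ v = 1) := by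
        intro v hv
        have m1 := code_mem_iff (fuel+1) hT1 hle v hv
        have m2 := code_mem_iff (fuel+1) hT2 hle v hv
        have d1 := one_le_degE hT1 (by omega) hv
        have d2 := one_le_degE hT2 (by omega) hv
        rw [hcodeOrig] at m1
        constructor
        · intro h
          by_contra hne
          have h22 : 2 ≤ degE E₂ v := by omega
          have := m1.mp (m2.mpr h22)
          omega
        · intro h
          by_contra hne
          have h21 : 2 ≤ degE E₁ v := by omega
          have := m2.mp (m1.mpr h21)
          omega
      have hℓ : ℓ₁ = ℓ₂ :=
        le_antisymm (hmax₂ ℓ₁ hℓV₁ ((hdiff ℓ₁ hℓV₁).mp hdeg₁))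
          (hmax₁ ℓ₂ hℓV₂ ((hdiff ℓ₂ hℓV₂).mpr hdeg₂))
      subst hℓ
      subst hp
      have hT1' := tree_erase_leaf hT1 hℓV₁ hpℓ₁ hpE₁ hfil₁
      have hT2' := tree_erase_leaf hT2 hℓV₂ hpℓ₂ hpE₂ hfil₂
      have hcard := Finset.card_erase_of_mem hℓV₁
      have hE' := ih hT1' hT2' (by omega) (by omega) hc
      calc E₁ = insert s(ℓ₁, p₁) (E₁.erase s(ℓ₁, p₁)) := (Finset.insert_erase hpE₁).symm
        _ = insert s(ℓ₁, p₁) (E₂.erase s(ℓ₁, p₁)) := by rw [hE']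
        _ = E₂ := Finset.insert_erase hpE₂
    · obtain ⟨a, b, hab, hVab⟩ := Finset.card_eq_two.mp (show #V = 2 by omega)
      rw [tree_two hT1 hab hVab, tree_two hT2 hab hVab]
def listsOf : ℕ → Finset α → Finset (List α)
  | 0, _ => {[]}
  | (k+1), V => (V ×ˢ listsOf k V).image fun p => p.1 :: p.2

theorem card_listsOf : ∀ (k : ℕ) (V : Finset α), #(listsOf k V) = #V ^ k
  | 0, V => by simp [listsOf]
  | (k+1), V => by
    rw [listsOf, Finset.card_image_of_injOn, Finset.card_product, card_listsOf k V, pow_succ,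
      mul_comm]
    intro p _ q _ h
    simp only [List.cons.injEq] at h
    exact Prod.ext h.1 h.2

theorem mem_listsOf : ∀ (k : ℕ) (V : Finset α) (l : List α), l.length = k →
    (∀ x ∈ l, x ∈ V) → l ∈ listsOf k V
  | 0, V, l, hl, _ => by
    rw [List.length_eq_zero_iff] at hl
    simp [listsOf, hl]
  | (k+1), V, l, hl, hsub => by
    cases l with
    | nil => simp at hl
    | cons x t =>
      refine Finset.mem_image.mpr ⟨(x, t), Finset.mem_product.mpr ⟨?_, ?_⟩, rfl⟩
      · exact hsub x (List.mem_cons_self)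
      · exact mem_listsOf k V t (by simpa using hl) fun y hy => hsub y (List.mem_cons_of_mem _ hy)

def allEdges (V : Finset α) : Finset (Sym2 α) := (V ×ˢ V).image fun p => s(p.1, p.2)

theorem mem_allEdges {V : Finset α} {e : Sym2 α} (h : ∀ x ∈ e, x ∈ V) : e ∈ allEdges V := by
  induction e with
  | _ a b =>
    exact Finset.mem_image.mpr ⟨(a, b), Finset.mem_product.mpr
      ⟨h a (Sym2.mem_mk_left _ _), h b (Sym2.mem_mk_right _ _)⟩, rfl⟩

open Classical in
noncomputable def treeSet (V : Finset α) : Finset (Finset (Sym2 α)) :=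
  (allEdges V).powerset.filter fun E => IsTreeOn V E

theorem mem_treeSet {V : Finset α} {E : Finset (Sym2 α)} (hT : IsTreeOn V E) :
    E ∈ treeSet V := by
  classical
  rw [treeSet, Finset.mem_filter, Finset.mem_powerset]
  exact ⟨fun e he => mem_allEdges (hT.1 e he), hT⟩

theorem card_treeSet_le (V : Finset α) (h2 : 2 ≤ #V) :
    #(treeSet V) ≤ #V ^ (#V - 2) := by
  classical
  rw [← card_listsOf (#V - 2) V]
  apply Finset.card_le_card_of_injOn (fun E => code (#V) V E)
  · intro E hE
    have hT : IsTreeOn V E := (Finset.mem_filter.mp hE).2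
    have hlen := code_length (#V) hT h2 (by omega)
    exact mem_listsOf _ _ _ (by beta_reduce; omega) (fun x hx => code_sub _ hT x hx)
  · intro E₁ h₁ E₂ h₂ h
    exact code_inj (#V) (Finset.mem_filter.mp h₁).2 (Finset.mem_filter.mp h₂).2 h2 (by omega) h
theorem exists_crossing {G : Finset (Sym2 α)} {S : Finset α} {u x : α}
    (hc : Con G u x) (hu : u ∈ S) (hx : x ∉ S) :
    ∃ a c, a ∈ S ∧ c ∉ S ∧ s(a, c) ∈ G := by
  induction hc with
  | refl => exact absurd hu hx
  | tail hab hstep ih =>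
    rename_i b c
    by_cases hb : b ∈ S
    · exact ⟨b, c, hb, hx, hstep⟩
    · exact ih hb

theorem grow {V : Finset α} {G : Finset (Sym2 α)}
    (hGV : ∀ e ∈ G, ∀ x ∈ e, x ∈ V) (hGd : ∀ e ∈ G, ¬ e.IsDiag)
    (hcon : ∀ x ∈ V, ∀ y ∈ V, Con G x y) :
    ∀ (k : ℕ) (S : Finset α) (E : Finset (Sym2 α)), S ⊆ V → IsTreeOn S E → E ⊆ G →
      #(V \ S) = k → ∃ E', IsTreeOn V E' ∧ E' ⊆ G := by
  intro k
  induction k with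
  | zero =>
    intro S E hSV hT hEG hcard
    have : S = V := Finset.Subset.antisymm hSV fun x hx => by
      by_contra hxS
      have : x ∈ V \ S := Finset.mem_sdiff.mpr ⟨hx, hxS⟩
      rw [Finset.card_eq_zero.mp hcard] at this
      exact absurd this (Finset.notMem_empty _)
    exact ⟨E, this ▸ hT, hEG⟩
  | succ k ih =>
    intro S E hSV hT hEG hcard
    obtain ⟨b, hb⟩ : (V \ S).Nonempty := Finset.card_pos.mp (by omega)
    obtain ⟨hbV, hbS⟩ := Finset.mem_sdiff.mp hb
    obtain ⟨v₀, hv₀⟩ : S.Nonempty := Finset.card_pos.mp (by have := hT.2.2.1; omega)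
    obtain ⟨a, c, haS, hcS, hacG⟩ :=
      exists_crossing (hcon v₀ (hSV hv₀) b hbV) hv₀ hbS
    have hcV : c ∈ V := hGV _ hacG c (Sym2.mem_mk_right _ _)
    have hac : a ≠ c := fun h => hcS (h ▸ haS)
    have hnotE : s(a, c) ∉ E := fun h =>
      hcS (hT.1 _ h c (Sym2.mem_mk_right _ _))
    have hT' : IsTreeOn (insert c S) (insert s(a, c) E) := by
      obtain ⟨hV1, hd1, hc1, hcon1⟩ := hT
      refine ⟨?_, ?_, ?_, ?_⟩
      · intro e he x hx
        rcases Finset.mem_insert.mp he with rfl | he'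
        · rcases Sym2.mem_iff.mp hx with rfl | rfl
          · exact Finset.mem_insert_of_mem haS
          · exact Finset.mem_insert_self _ _
        · exact Finset.mem_insert_of_mem (hV1 e he' x hx)
      · intro e he
        rcases Finset.mem_insert.mp he with rfl | he'
        · exact fun hd => hac (Sym2.mk_isDiag_iff.mp hd)
        · exact hd1 e he'
      · rw [Finset.card_insert_of_notMem hnotE, Finset.card_insert_of_notMem hcS]
        omega
      · have hstep : Con (insert s(a, c) E) a c :=
          Relation.ReflTransGen.single (Finset.mem_insert_self _ _)
        have hup : ∀ x ∈ S, Con (insert s(a, c) E) x c := fun x hx =>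
          Con.trans (Con.mono (Finset.subset_insert _ _) (hcon1 x hx a haS)) hstep
        intro x hx y hy
        rcases Finset.mem_insert.mp hx with rfl | hx' <;>
          rcases Finset.mem_insert.mp hy with rfl | hy'
        · exact Relation.ReflTransGen.refl
        · exact (hup y hy').symm
        · exact hup x hx'
        · exact Con.mono (Finset.subset_insert _ _) (hcon1 x hx' y hy')
    refine ih (insert c S) (insert s(a, c) E) ?_ hT' ?_ ?_
    · exact Finset.insert_subset hcV hSV
    · exact Finset.insert_subset hacG hEG
    · rw [show V \ insert c S = (V \ S).erase c by
        ext z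
        simp only [Finset.mem_erase, Finset.mem_sdiff, Finset.mem_insert]
        tauto]
      rw [Finset.card_erase_of_mem (Finset.mem_sdiff.mpr ⟨hcV, hcS⟩)]
      omega

theorem exists_spanning_tree {V : Finset α} {G : Finset (Sym2 α)}
    (hGV : ∀ e ∈ G, ∀ x ∈ e, x ∈ V) (hGd : ∀ e ∈ G, ¬ e.IsDiag)
    (hcon : ∀ x ∈ V, ∀ y ∈ V, Con G x y) (hV : V.Nonempty) :
    ∃ E', IsTreeOn V E' ∧ E' ⊆ G := by
  obtain ⟨v₀, hv₀⟩ := hV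
  refine grow hGV hGd hcon #(V \ {v₀}) {v₀} ∅ ?_ ?_ ?_ rfl
  · simpa using hv₀
  · refine ⟨fun e he => absurd he (Finset.notMem_empty _),
      fun e he => absurd he (Finset.notMem_empty _), by simp, ?_⟩
    intro x hx y hy
    rw [Finset.mem_singleton] at hx hy
    rw [hx, hy]
    exact Relation.ReflTransGen.refl
  · exact Finset.empty_subset _
end RKGaux


section KeyCount

open RKGaux

variable {n P K : ℕ}

/-- Edge event: the key rings at the two endpoints of `e` intersect. -/
def meetsEdge (κ : Fin n → KeyRing P K) (e : Sym2 (Fin n)) : Prop :=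
  ∃ a b, e = s(a, b) ∧ ((κ a).1 ∩ (κ b).1).Nonempty

theorem meetsEdge_mk {κ : Fin n → KeyRing P K} {a b : Fin n}
    (h : meetsEdge κ s(a, b)) : ((κ a).1 ∩ (κ b).1).Nonempty := by
  obtain ⟨x, y, hxy, hne⟩ := h
  rcases Sym2.eq_iff.mp hxy with ⟨rfl, rfl⟩ | ⟨rfl, rfl⟩
  · exact hne
  · rwa [Finset.inter_comm] at hne

theorem meetsEdge_update {κ : Fin n → KeyRing P K} {ℓ : Fin n} {y : KeyRing P K}
    {e : Sym2 (Fin n)} (hℓ : ℓ ∉ e) (h : meetsEdge κ e) :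
    meetsEdge (Function.update κ ℓ y) e := by
  obtain ⟨a, b, rfl, hne⟩ := h
  have ha : a ≠ ℓ := fun h' => hℓ (h' ▸ Sym2.mem_mk_left _ _)
  have hb : b ≠ ℓ := fun h' => hℓ (h' ▸ Sym2.mem_mk_right _ _)
  exact ⟨a, b, rfl, by rwa [Function.update_of_ne ha, Function.update_of_ne hb]⟩

/-- All edges of `E` are present in the random key graph of `κ`. -/
def OkE (E : Finset (Sym2 (Fin n))) (κ : Fin n → KeyRing P K) : Prop :=
  ∀ e ∈ E, meetsEdge κ e

instance meetsEdge.dec (κ : Fin n → KeyRing P K) (e : Sym2 (Fin n)) :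
    Decidable (meetsEdge κ e) :=
  decidable_of_iff (∃ a b, e = s(a, b) ∧ ((κ a).1 ∩ (κ b).1).Nonempty) Iff.rfl

instance OkE.dec (E : Finset (Sym2 (Fin n))) (κ : Fin n → KeyRing P K) :
    Decidable (OkE E κ) :=
  decidable_of_iff (∀ e ∈ E, meetsEdge κ e) Iff.rfl

theorem card_keyRing (hKP : K ≤ P) :
    Fintype.card (KeyRing P K) = P.choose K := by
  rw [Fintype.card_finset_len, Fintype.card_fin]

theorem card_meets (A : KeyRing P K) (hKP : K ≤ P) :
    #(Finset.univ.filter fun B : KeyRing P K => (B.1 ∩ A.1).Nonempty) =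
      P.choose K - (P - K).choose K := by
  have hdisj : #(Finset.univ.filter fun B : KeyRing P K => ¬ (B.1 ∩ A.1).Nonempty) =
      (P - K).choose K := by
    have hcc : #(A.1ᶜ) = P - K := by
      rw [Finset.card_compl, Fintype.card_fin, A.2]
    rw [← hcc, ← Finset.card_powersetCard K A.1ᶜ]
    apply Finset.card_bij (fun B _ => B.1)
    · intro B hB
      rw [Finset.mem_powersetCard]
      refine ⟨?_, B.2⟩
      have h := (Finset.mem_filter.mp hB).2
      rw [Finset.not_nonempty_iff_eq_empty] at h
      intro x hx
      rw [Finset.mem_compl]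
      intro hxA
      have : x ∈ B.1 ∩ A.1 := Finset.mem_inter.mpr ⟨hx, hxA⟩
      rw [h] at this
      exact absurd this (Finset.notMem_empty _)
    · intro B _ C _ h
      exact Subtype.ext h
    · intro C hC
      rw [Finset.mem_powersetCard] at hC
      refine ⟨⟨C, hC.2⟩, Finset.mem_filter.mpr ⟨Finset.mem_univ _, ?_⟩, rfl⟩
      rw [Finset.not_nonempty_iff_eq_empty]
      rw [Finset.eq_empty_iff_forall_notMem]
      intro x hx
      have := Finset.mem_inter.mp hx
      have := hC.1 this.1
      rw [Finset.mem_compl] at this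
      exact this (Finset.mem_inter.mp hx).2
  have hsplit := Finset.card_filter_add_card_filter_not
    (s := (Finset.univ : Finset (KeyRing P K)))
    (fun B : KeyRing P K => (B.1 ∩ A.1).Nonempty)
  rw [Finset.card_univ, card_keyRing hKP] at hsplit
  omega

theorem key_step {ℓ p : Fin n} (hpℓ : p ≠ ℓ) {E' E : Finset (Sym2 (Fin n))}
    (hℓE' : ∀ e ∈ E', ℓ ∉ e) (hKP : K ≤ P)
    (hE : ∀ κ : Fin n → KeyRing P K, OkE E κ ↔ OkE (insert s(ℓ, p) E') κ) :
    P.choose K * #(Finset.univ.filter fun κ : Fin n → KeyRing P K => OkE E κ) ≤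
      (P.choose K - (P - K).choose K) *
        #(Finset.univ.filter fun κ : Fin n → KeyRing P K => OkE E' κ) := by
  have hfeq : (Finset.univ.filter fun κ : Fin n → KeyRing P K => OkE E κ) =
      (Finset.univ.filter fun κ : Fin n → KeyRing P K => OkE (insert s(ℓ, p) E') κ) := by
    apply Finset.filter_congr
    intro κ _
    exact iff_iff_eq.mp (hE κ) ▸ Iff.rfl
  rw [hfeq]
  set c := P.choose K - (P - K).choose K with hc
  set S1 := Finset.univ.filter fun κ : Fin n → KeyRing P K => OkE (insert s(ℓ, p) E') κ
    with hS1
  set S2 := Finset.univ.filter fun κ : Fin n → KeyRing P K => OkE E' κ with hS2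
  set T : Finset ((Fin n → KeyRing P K) × KeyRing P K) :=
    Finset.univ.filter (fun z => OkE E' z.1 ∧ (z.2.1 ∩ (z.1 p).1).Nonempty) with hT
  have step1 : #((Finset.univ : Finset (KeyRing P K)) ×ˢ S1) ≤ #T := by
    apply Finset.card_le_card_of_injOn
      (fun z => (Function.update z.2 ℓ z.1, z.2 ℓ))
    · rintro ⟨y, κ⟩ hz
      rw [Finset.mem_coe, Finset.mem_product, hS1, Finset.mem_filter] at hz
      have hOk := hz.2.2
      rw [Finset.mem_coe, hT, Finset.mem_filter]
      refine ⟨Finset.mem_univ _, ?_, ?_⟩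
      · intro e he
        exact meetsEdge_update (hℓE' e he) (hOk e (Finset.mem_insert_of_mem he))
      · have hm := meetsEdge_mk (hOk s(ℓ, p) (Finset.mem_insert_self _ _))
        show ((κ ℓ).1 ∩ ((Function.update κ ℓ y) p).1).Nonempty
        rw [Function.update_of_ne hpℓ]
        exact hm
    · rintro ⟨y₁, κ₁⟩ h₁ ⟨y₂, κ₂⟩ h₂ h
      simp only [Prod.mk.injEq] at h
      obtain ⟨h1, h2⟩ := h
      have hy : y₁ = y₂ := by
        have := congrFun h1 ℓ
        rwa [Function.update_self, Function.update_self] at this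
      refine Prod.ext hy (funext fun i => ?_)
      rcases eq_or_ne i ℓ with rfl | hi
      · exact h2
      · have := congrFun h1 i
        rwa [Function.update_of_ne hi, Function.update_of_ne hi] at this
  have step2 : #T = c * #S2 := by
    have hTeq : T = S2.biUnion (fun κ' => ({κ'} : Finset (Fin n → KeyRing P K)) ×ˢ
        (Finset.univ.filter fun y : KeyRing P K => (y.1 ∩ (κ' p).1).Nonempty)) := by
      ext z
      rw [hT, Finset.mem_filter, Finset.mem_biUnion]
      constructor
      · rintro ⟨-, hOk, hmeet⟩
        exact ⟨z.1, Finset.mem_filter.mpr ⟨Finset.mem_univ _, hOk⟩,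
          Finset.mem_product.mpr ⟨Finset.mem_singleton_self _,
            Finset.mem_filter.mpr ⟨Finset.mem_univ _, hmeet⟩⟩⟩
      · rintro ⟨κ', hκ', hz⟩
        rw [Finset.mem_product, Finset.mem_singleton] at hz
        obtain ⟨rfl, hz2⟩ := hz
        exact ⟨Finset.mem_univ _, (Finset.mem_filter.mp hκ').2,
          (Finset.mem_filter.mp hz2).2⟩
    rw [hTeq, Finset.card_biUnion]
    · have : ∀ κ' ∈ S2, #(({κ'} : Finset (Fin n → KeyRing P K)) ×ˢ
          (Finset.univ.filter fun y : KeyRing P K => (y.1 ∩ (κ' p).1).Nonempty)) = c := by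
        intro κ' _
        rw [Finset.card_product, Finset.card_singleton, one_mul, card_meets _ hKP]
      rw [Finset.sum_congr rfl this, Finset.sum_const, smul_eq_mul, mul_comm]
    · intro x hx y hy hxy
      rw [Function.onFun, Finset.disjoint_left]
      intro z hz1 hz2
      rw [Finset.mem_product, Finset.mem_singleton] at hz1 hz2
      exact hxy (hz1.1.symm.trans hz2.1)
  calc P.choose K * #S1 = #((Finset.univ : Finset (KeyRing P K)) ×ˢ S1) := by
        rw [Finset.card_product, Finset.card_univ, card_keyRing hKP]
    _ ≤ #T := step1
    _ = c * #S2 := step2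

theorem count_tree (hKP : K ≤ P) : ∀ (m : ℕ) (V : Finset (Fin n)) (E : Finset (Sym2 (Fin n))),
    IsTreeOn V E → #V = m →
    #(Finset.univ.filter fun κ : Fin n → KeyRing P K => OkE E κ) * (P.choose K) ^ #E ≤
      (P.choose K - (P - K).choose K) ^ #E * (P.choose K) ^ n := by
  intro m
  induction m using Nat.strong_induction_on with
  | _ m ih =>
    intro V E hT hVm
    by_cases h2 : 2 ≤ #V
    · obtain ⟨ℓ, hℓV, hdeg⟩ := exists_leaf hT h2
      obtain ⟨p, hpℓ, hpV, hpE, hfil⟩ := leaf_edge hT hℓV hdeg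
      have hins : insert s(ℓ, p) (E.erase s(ℓ, p)) = E := Finset.insert_erase hpE
      have hkey := key_step (n := n) (E := E) hpℓ (notMem_of_erase hfil) hKP
        (fun κ => by rw [hins])
      have hT' := tree_erase_leaf hT hℓV hpℓ hpE hfil
      have hEcard : #(E.erase s(ℓ, p)) + 1 = #E := by
        rw [Finset.card_erase_of_mem hpE]
        have : 1 ≤ #E := Finset.card_pos.mpr ⟨_, hpE⟩
        omega
      have hVcard : #(V.erase ℓ) = m - 1 := by
        rw [Finset.card_erase_of_mem hℓV, hVm]
      have ihh := ih (m - 1) (by omega) (V.erase ℓ) (E.erase s(ℓ, p)) hT' hVcard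
      set N := P.choose K
      set c := N - (P - K).choose K
      set A := #(Finset.univ.filter fun κ : Fin n → KeyRing P K => OkE E κ)
      set B := #(Finset.univ.filter fun κ : Fin n → KeyRing P K => OkE (E.erase s(ℓ, p)) κ)
      calc A * N ^ #E = (N * A) * N ^ #(E.erase s(ℓ, p)) := by
            rw [← hEcard, pow_succ]; ring
        _ ≤ (c * B) * N ^ #(E.erase s(ℓ, p)) := Nat.mul_le_mul_right _ hkey
        _ = c * (B * N ^ #(E.erase s(ℓ, p))) := by ring
        _ ≤ c * (c ^ #(E.erase s(ℓ, p)) * N ^ n) := Nat.mul_le_mul_left _ ihh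
        _ = c ^ #E * N ^ n := by rw [← hEcard, pow_succ]; ring
    · have hE0 : E = ∅ := Finset.card_eq_zero.mp (by have := hT.2.2.1; omega)
      subst hE0
      have hfT : (Finset.univ.filter fun κ : Fin n → KeyRing P K =>
          OkE (∅ : Finset (Sym2 (Fin n))) κ) = Finset.univ := by
        apply Finset.filter_true_of_mem
        intro κ _ e he
        exact absurd he (Finset.notMem_empty _)
      rw [hfT, Finset.card_univ, Fintype.card_fun, card_keyRing hKP, Fintype.card_fin]
      simp

end KeyCount

section Main

open RKGaux

theorem isTreeOn_of_mem_treeSet {α : Type*} [LinearOrder α] [DecidableEq α]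
    {V : Finset α} {E : Finset (Sym2 α)} (h : E ∈ treeSet V) : IsTreeOn V E := by
  classical
  rw [treeSet] at h
  exact (Finset.mem_filter.mp h).2

theorem mem_of_mem_allEdges {α : Type*} [LinearOrder α] [DecidableEq α]
    {V : Finset α} {e : Sym2 α} (he : e ∈ allEdges V) : ∀ x ∈ e, x ∈ V := by
  rw [allEdges, Finset.mem_image] at he
  obtain ⟨⟨a, b⟩, hab, rfl⟩ := he
  rw [Finset.mem_product] at hab
  intro x hx
  rcases Sym2.mem_iff.mp hx with rfl | rfl
  · exact hab.1
  · exact hab.2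

theorem filter_inst_eq {β : Type*} (s : Finset β) (p : β → Prop)
    (h1 h2 : DecidablePred p) : @Finset.filter β p h1 s = @Finset.filter β p h2 s :=
  (Finset.filter_congr_decidable s p h1).trans (Finset.filter_congr_decidable s p h2).symm

theorem conn_to_tree {n P K r : ℕ} (hrn : r ≤ n) (κ : Fin n → KeyRing P K)
    (hconn : (rkg (fun i : Fin r => κ (Fin.castLE hrn i))).Connected) :
    ∃ E ∈ treeSet ((Finset.univ : Finset (Fin r)).map (Fin.castLEEmb hrn)), OkE E κ := by
  set V := (Finset.univ : Finset (Fin r)).map (Fin.castLEEmb hrn) with hV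
  set G : Finset (Sym2 (Fin n)) :=
    (allEdges V).filter (fun e => ¬ e.IsDiag ∧ meetsEdge κ e) with hG
  have hGV : ∀ e ∈ G, ∀ x ∈ e, x ∈ V := fun e he =>
    mem_of_mem_allEdges (Finset.mem_filter.mp he).1
  have hGd : ∀ e ∈ G, ¬ e.IsDiag := fun e he => (Finset.mem_filter.mp he).2.1
  have hwalk : ∀ {a b : Fin r},
      (rkg (fun i : Fin r => κ (Fin.castLE hrn i))).Walk a b →
      Con G (Fin.castLEEmb hrn a) (Fin.castLEEmb hrn b) := by
    intro a b w
    induction w with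
    | nil => exact Relation.ReflTransGen.refl
    | cons h w' ih =>
      rename_i u v _
      refine Relation.ReflTransGen.head ?_ ih
      rw [hG, Finset.mem_filter]
      refine ⟨mem_allEdges ?_, ?_, ?_⟩
      · intro x hx
        rcases Sym2.mem_iff.mp hx with rfl | rfl
        · exact Finset.mem_map_of_mem _ (Finset.mem_univ u)
        · exact Finset.mem_map_of_mem _ (Finset.mem_univ v)
      · intro hd
        exact (show _ ≠ _ ∧ _ from h).1 ((Fin.castLEEmb hrn).injective (Sym2.mk_isDiag_iff.mp hd))
      · exact ⟨_, _, rfl, (show _ ≠ _ ∧ _ from h).2⟩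
  have hcon : ∀ x ∈ V, ∀ y ∈ V, Con G x y := by
    intro x hx y hy
    rw [hV, Finset.mem_map] at hx hy
    obtain ⟨x', -, rfl⟩ := hx
    obtain ⟨y', -, rfl⟩ := hy
    exact (hconn.preconnected x' y').elim fun w => hwalk w
  have hVne : V.Nonempty := by
    obtain ⟨i⟩ := hconn.nonempty
    exact ⟨_, Finset.mem_map_of_mem _ (Finset.mem_univ i)⟩
  obtain ⟨E, hTE, hEG⟩ := exists_spanning_tree hGV hGd hcon hVne
  exact ⟨E, mem_treeSet hTE, fun e he => (Finset.mem_filter.mp (hEG he)).2.2⟩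

end Main

open RKGaux

/-- The probability that the subgraph of the random key graph induced on the
vertices `{1,…,r}` is connected is at most `r^(r-2) (1-q)^(r-1)`, where
`q = C(P-K, K)/C(P, K)`. -/
theorem stmt8 (n P K r : ℕ) (hK : 0 < K) (h2K : 2 * K ≤ P)
    (hr2 : 2 ≤ r) (hrn : r ≤ n) :
    pr n P K (fun κ => (rkg (fun i : Fin r => κ (Fin.castLE hrn i))).Connected) ≤
      (r : ℝ) ^ (r - 2) * (1 - ((P - K).choose K : ℝ) / (P.choose K : ℝ)) ^ (r - 1) := by
  classical
  have hKP : K ≤ P := by omega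
  set N := P.choose K with hN
  set D := (P - K).choose K with hD
  have hDN : D ≤ N := Nat.choose_le_choose K (Nat.sub_le P K)
  have hN0 : 0 < N := Nat.choose_pos hKP
  set c := N - D with hc
  set V := (Finset.univ : Finset (Fin r)).map (Fin.castLEEmb hrn) with hV
  have hVcard : #V = r := by
    rw [hV, Finset.card_map, Finset.card_univ, Fintype.card_fin]
  -- natural number bound
  set S := Finset.univ.filter
    (fun κ : Fin n → KeyRing P K =>
      (rkg (fun i : Fin r => κ (Fin.castLE hrn i))).Connected) with hS
  have hsub : S ⊆ (treeSet V).biUnion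
      (fun E => Finset.univ.filter fun κ : Fin n → KeyRing P K => OkE E κ) := by
    intro κ hκ
    have hconn := (Finset.mem_filter.mp hκ).2
    obtain ⟨E, hE, hOk⟩ := conn_to_tree hrn κ hconn
    exact Finset.mem_biUnion.mpr ⟨E, hE, Finset.mem_filter.mpr ⟨Finset.mem_univ _, hOk⟩⟩
  have hA1 : #S ≤ ∑ E ∈ treeSet V,
      #(Finset.univ.filter fun κ : Fin n → KeyRing P K => OkE E κ) :=
    le_trans (Finset.card_le_card hsub) (Finset.card_biUnion_le)
  have hterm : ∀ E ∈ treeSet V,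
      #(Finset.univ.filter fun κ : Fin n → KeyRing P K => OkE E κ) * N ^ (r - 1) ≤
        c ^ (r - 1) * N ^ n := by
    intro E hE
    have hT := isTreeOn_of_mem_treeSet hE
    have hEcard : #E = r - 1 := by
      have := hT.2.2.1
      rw [hVcard] at this
      omega
    have h := count_tree (n := n) hKP (#V) V E hT rfl
    rwa [hEcard] at h
  have hTS : #(treeSet V) ≤ r ^ (r - 2) := by
    have := card_treeSet_le V (by omega)
    rwa [hVcard] at this
  have hA2 : #S * N ^ (r - 1) ≤ r ^ (r - 2) * (c ^ (r - 1) * N ^ n) := by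
    calc #S * N ^ (r - 1)
        ≤ (∑ E ∈ treeSet V,
            #(Finset.univ.filter fun κ : Fin n → KeyRing P K => OkE E κ)) * N ^ (r - 1) :=
          Nat.mul_le_mul_right _ hA1
      _ = ∑ E ∈ treeSet V,
            #(Finset.univ.filter fun κ : Fin n → KeyRing P K => OkE E κ) * N ^ (r - 1) :=
          Finset.sum_mul ..
      _ ≤ ∑ _E ∈ treeSet V, c ^ (r - 1) * N ^ n := Finset.sum_le_sum hterm
      _ = #(treeSet V) * (c ^ (r - 1) * N ^ n) := by
          rw [Finset.sum_const, smul_eq_mul]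
      _ ≤ r ^ (r - 2) * (c ^ (r - 1) * N ^ n) := Nat.mul_le_mul_right _ hTS
  -- pass to the reals
  have hcard : (Fintype.card (Fin n → KeyRing P K) : ℝ) = (N : ℝ) ^ n := by
    rw [Fintype.card_fun, card_keyRing hKP, Fintype.card_fin]
    push_cast
    ring
  have hq : (1 : ℝ) - (D : ℝ) / (N : ℝ) = (c : ℝ) / (N : ℝ) := by
    have hcc : (c : ℝ) = (N : ℝ) - (D : ℝ) := by
      rw [hc, Nat.cast_sub hDN]
    have hNne : (N : ℝ) ≠ 0 := by positivity
    rw [hcc, sub_div, div_self hNne]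
  have hNr : (0 : ℝ) < (N : ℝ) ^ (r - 1) := by positivity
  have hNn : (0 : ℝ) < (N : ℝ) ^ n := by positivity
  unfold pr
  rw [hcard]
  rw [show (@Finset.filter _
      (fun κ : Fin n → KeyRing P K => (rkg fun i : Fin r => κ (Fin.castLE hrn i)).Connected)
      (Classical.decPred _) Finset.univ) = S from (filter_inst_eq _ _ _ _).trans hS.symm]
  rw [hq, div_pow, ← mul_div_assoc, div_le_div_iff₀ hNn hNr]
  have := hA2
  have hcast : (#S : ℝ) * (N : ℝ) ^ (r - 1) ≤
      (r : ℝ) ^ (r - 2) * ((c : ℝ) ^ (r - 1) * (N : ℝ) ^ n) := by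
    exact_mod_cast hA2
  calc (#S : ℝ) * (N : ℝ) ^ (r - 1)
      ≤ (r : ℝ) ^ (r - 2) * ((c : ℝ) ^ (r - 1) * (N : ℝ) ^ n) := hcast
    _ = (r : ℝ) ^ (r - 2) * (c : ℝ) ^ (r - 1) * (N : ℝ) ^ n := by ring
end

section
/- In the random key graph K(n; K, P) with K ≤ P and n ≥ 2, for each r = 1,…,n-1 and each positive integer x, the probability of the event A_{n,r} that the subgraph on {1,…,r} is connected and {1,…,r} is isolated from its complement satisfies P[A_{n,r}] ≤ P[U_r ≤ x]·exp(-(n-r)K²/P) + P[C_r]·exp(-(n-r)(K/P)(x+1)), where U_r = |K_1 ∪ ⋯ ∪ K_r| and C_r is the event that the subgraph on {1,…,r} is connected. -/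
open Finset

/- ### Auxiliary lemmas -/

lemma descFactorial_mul_pow_le (k : ℕ) {a b : ℕ} (hab : a ≤ b) :
    a.descFactorial k * b ^ k ≤ b.descFactorial k * a ^ k := by
  induction k with
  | zero => simp
  | succ k ih =>
    rw [Nat.descFactorial_succ, Nat.descFactorial_succ, pow_succ, pow_succ]
    calc (a - k) * a.descFactorial k * (b ^ k * b)
        = ((a - k) * b) * (a.descFactorial k * b ^ k) := by ring
      _ ≤ ((b - k) * a) * (b.descFactorial k * a ^ k) := by
          apply Nat.mul_le_mul _ ih
          rw [Nat.sub_mul, Nat.sub_mul, Nat.mul_comm a b]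
          exact Nat.sub_le_sub_left (Nat.mul_le_mul_left k hab) _
      _ = (b - k) * b.descFactorial k * (a ^ k * a) := by ring

lemma choose_mul_pow_le (k : ℕ) {a b : ℕ} (hab : a ≤ b) :
    a.choose k * b ^ k ≤ b.choose k * a ^ k := by
  have h := descFactorial_mul_pow_le k hab
  rw [Nat.descFactorial_eq_factorial_mul_choose, Nat.descFactorial_eq_factorial_mul_choose] at h
  have hf : 0 < k.factorial := Nat.factorial_pos k
  rw [Nat.mul_assoc, Nat.mul_assoc] at h
  exact Nat.le_of_mul_le_mul_left h hf

lemma choose_le_exp {P K u : ℕ} (hP : 0 < P) (hu : u ≤ P) :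
    ((P - u).choose K : ℝ) ≤ (P.choose K : ℝ) * Real.exp (-((K : ℝ) * u / P)) := by
  have hP' : (0:ℝ) < P := by exact_mod_cast hP
  have h1 : ((P - u).choose K : ℝ) * (P:ℝ)^K ≤ (P.choose K : ℝ) * ((P - u : ℕ) : ℝ)^K := by
    exact_mod_cast choose_mul_pow_le K (Nat.sub_le P u)
  have hcast : ((P - u : ℕ) : ℝ) = (P:ℝ) - u := by
    push_cast [Nat.cast_sub hu]; ring
  have hbase : ((P:ℝ) - u) / P ≤ Real.exp (-((u:ℝ)/P)) := by
    have := Real.add_one_le_exp (-((u:ℝ)/P))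
    have : 1 - (u:ℝ)/P ≤ Real.exp (-((u:ℝ)/P)) := by linarith
    calc ((P:ℝ) - u)/P = 1 - (u:ℝ)/P := by field_simp
      _ ≤ _ := this
  have hbase0 : (0:ℝ) ≤ ((P:ℝ) - u)/P := by
    apply div_nonneg _ hP'.le
    have : (u:ℝ) ≤ P := by exact_mod_cast hu
    linarith
  have h2 : ((P - u).choose K : ℝ) ≤ (P.choose K : ℝ) * (((P:ℝ) - u)/P)^K := by
    rw [div_pow, ← mul_div_assoc]
    rw [le_div_iff₀ (by positivity)]
    calc ((P - u).choose K : ℝ) * (P:ℝ)^K ≤ (P.choose K : ℝ) * ((P - u : ℕ) : ℝ)^K := h1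
      _ = (P.choose K : ℝ) * ((P:ℝ) - u)^K := by rw [hcast]
  calc ((P - u).choose K : ℝ) ≤ (P.choose K : ℝ) * (((P:ℝ) - u)/P)^K := h2
    _ ≤ (P.choose K : ℝ) * (Real.exp (-((u:ℝ)/P)))^K := by
        apply mul_le_mul_of_nonneg_left _ (by positivity)
        exact pow_le_pow_left₀ hbase0 hbase K
    _ = (P.choose K : ℝ) * Real.exp (-((K:ℝ) * u / P)) := by
        rw [← Real.exp_nat_mul]; ring_nf

lemma choose_pow_le_exp {P K u : ℕ} (m : ℕ) (hP : 0 < P) (hu : u ≤ P) :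
    (((P - u).choose K : ℝ))^m ≤ ((P.choose K : ℝ))^m * Real.exp (-((m : ℝ) * K * u / P)) := by
  calc (((P - u).choose K : ℝ))^m ≤ ((P.choose K : ℝ) * Real.exp (-((K : ℝ) * u / P)))^m := by
        apply pow_le_pow_left₀ (by positivity) (choose_le_exp hP hu)
    _ = ((P.choose K : ℝ))^m * Real.exp (-((m : ℝ) * K * u / P)) := by
        rw [mul_pow, ← Real.exp_nat_mul]; ring_nf

lemma card_pi_filter {α β : Type*} [Fintype α] [Fintype β] [DecidableEq α] [DecidableEq β]
    (p : β → Prop) [DecidablePred p] :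
    (univ.filter (fun f : α → β => ∀ a, p (f a))).card
      = (univ.filter p).card ^ Fintype.card α := by
  rw [← Fintype.card_subtype, ← Fintype.card_subtype]
  rw [Fintype.card_congr (Equiv.subtypePiEquivPi (p := fun _ b => p b))]
  simp [Fintype.card_pi, Finset.prod_const]

lemma card_disjoint_rings {P K : ℕ} (T : Finset (Fin P)) :
    (univ.filter (fun S : KeyRing P K => S.1 ∩ T = ∅)).card = (P - T.card).choose K := by
  classical
  have h1 : (P - T.card).choose K = (Finset.powersetCard K Tᶜ).card := by
    rw [Finset.card_powersetCard, Finset.card_compl, Fintype.card_fin]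
  rw [h1]
  apply Finset.card_bij (fun S _ => S.1)
  · intro S hS
    simp only [mem_filter, mem_univ, true_and] at hS
    rw [Finset.mem_powersetCard]
    refine ⟨?_, S.2⟩
    rw [Finset.subset_compl_comm]
    intro t ht
    simp only [Finset.mem_compl]
    intro hmem
    have : t ∈ S.1 ∩ T := Finset.mem_inter.2 ⟨hmem, ht⟩
    simp [hS] at this
  · intro a _ b _ h
    exact Subtype.ext h
  · intro W hW
    rw [Finset.mem_powersetCard] at hW
    refine ⟨⟨W, hW.2⟩, ?_, rfl⟩
    simp only [mem_filter, mem_univ, true_and]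
    rw [← Finset.disjoint_iff_inter_eq_empty]
    exact Finset.disjoint_left.2 fun t ht hT => by
      have := hW.1 ht; simp at this; exact this hT

lemma card_keyring {P K : ℕ} : Fintype.card (KeyRing P K) = P.choose K := by
  classical
  have h := card_disjoint_rings (P := P) (K := K) ∅
  rw [Finset.filter_true_of_mem (by simp)] at h
  simp only [Finset.card_empty, Nat.sub_zero] at h
  rw [← h, Finset.card_univ]

/-- The probability that the first `r` nodes form a connected, isolated set is
bounded by `P[U_r ≤ x]·e^{-(n-r)K²/P} + P[C_r]·e^{-(n-r)(K/P)(x+1)}`, where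
`U_r` is the number of distinct keys held by nodes `1,…,r` and `C_r` is the
event that the subgraph induced on `{1,…,r}` is connected. -/
theorem stmt12 (n P K r x : ℕ) (hK : 0 < K) (hKP : K ≤ P) (hn : 2 ≤ n)
    (hr1 : 1 ≤ r) (hrn : r ≤ n - 1) (hx : 0 < x) :
    pr n P K (fun κ =>
        ((rkg κ).induce {i : Fin n | (i : ℕ) < r}).Connected ∧
        ∀ i j : Fin n, (i : ℕ) < r → r ≤ (j : ℕ) → (κ i).1 ∩ (κ j).1 = ∅) ≤
      pr n P K (fun κ =>
          ((Finset.univ.filter (fun i : Fin n => (i : ℕ) < r)).biUnion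
            (fun i => (κ i).1)).card ≤ x) *
        Real.exp (-(((n : ℝ) - (r : ℝ)) * (K : ℝ) ^ 2 / (P : ℝ))) +
      pr n P K (fun κ => ((rkg κ).induce {i : Fin n | (i : ℕ) < r}).Connected) *
        Real.exp (-(((n : ℝ) - (r : ℝ)) * ((K : ℝ) / (P : ℝ)) * ((x : ℝ) + 1))) := by
  classical
  have hrn' : r < n := by omega
  have hrn2 : r ≤ n := hrn'.le
  have hn0 : 0 < n := by omega
  have hP : 0 < P := lt_of_lt_of_le hK hKP
  obtain ⟨T0, -, hT0⟩ := Finset.exists_subset_card_eq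
    (show K ≤ (univ : Finset (Fin P)).card by simpa using hKP)
  set e := Equiv.piEquivPiSubtypeProd (fun i : Fin n => (i : ℕ) < r)
    (fun _ => KeyRing P K) with he
  set m := n - r with hm
  set N := P.choose K with hNdef
  -- values of `e.symm`
  have hlo : ∀ (a : {i : Fin n // (i:ℕ) < r} → KeyRing P K)
      (b : {i : Fin n // ¬ (i:ℕ) < r} → KeyRing P K) (i : Fin n) (h : (i:ℕ) < r),
      e.symm (a, b) i = a ⟨i, h⟩ := by
    intro a b i h
    simp [he, Equiv.piEquivPiSubtypeProd_symm_apply, dif_pos h]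
  have hhi : ∀ (a : {i : Fin n // (i:ℕ) < r} → KeyRing P K)
      (b : {i : Fin n // ¬ (i:ℕ) < r} → KeyRing P K) (j : Fin n) (h : ¬ (j:ℕ) < r),
      e.symm (a, b) j = b ⟨j, h⟩ := by
    intro a b j h
    simp [he, Equiv.piEquivPiSubtypeProd_symm_apply, dif_neg h]
  set u : ({i : Fin n // (i:ℕ) < r} → KeyRing P K) → ℕ :=
    fun a => (univ.biUnion fun i => (a i).1).card with hu
  have huP : ∀ a, u a ≤ P := by
    intro a
    simp only [hu]
    simpa using Finset.card_le_univ (univ.biUnion fun i : {i : Fin n // (i:ℕ) < r} => (a i).1)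
  have hzr : ((⟨0, hn0⟩ : Fin n) : ℕ) < r := by simpa using Nat.lt_of_lt_of_le Nat.zero_lt_one hr1
  have huK : ∀ a, K ≤ u a := by
    intro a
    have hsub := Finset.subset_biUnion_of_mem
      (s := (univ : Finset {i : Fin n // (i:ℕ) < r}))
      (fun i : {i : Fin n // (i:ℕ) < r} => (a i).1)
      (mem_univ (⟨⟨0, hn0⟩, hzr⟩ : {i : Fin n // (i:ℕ) < r}))
    simp only [hu]
    calc K = (a ⟨⟨0, hn0⟩, hzr⟩).1.card := (a _).2.symm
      _ ≤ _ := Finset.card_le_card hsub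
  have hUa : ∀ a b,
      ((univ.filter (fun i : Fin n => (i:ℕ) < r)).biUnion
        (fun i => ((e.symm (a,b)) i).1))
      = univ.biUnion fun i : {i : Fin n // (i:ℕ) < r} => (a i).1 := by
    intro a b
    ext t
    constructor
    · intro ht
      rw [mem_biUnion] at ht ⊢
      obtain ⟨i, hi, hti⟩ := ht
      rw [mem_filter] at hi
      exact ⟨⟨i, hi.2⟩, mem_univ _, by rw [← hlo a b i hi.2]; exact hti⟩
    · intro ht
      rw [mem_biUnion] at ht ⊢
      obtain ⟨⟨i, hi⟩, -, hti⟩ := ht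
      exact ⟨i, mem_filter.2 ⟨mem_univ _, hi⟩, by rw [hlo a b i hi]; exact hti⟩
  have hgr : ∀ a b b',
      (rkg (e.symm (a,b))).induce {i : Fin n | (i:ℕ) < r}
      = (rkg (e.symm (a,b'))).induce {i : Fin n | (i:ℕ) < r} := by
    intro a b b'
    ext ⟨i, hi⟩ ⟨j, hj⟩
    simp only [rkg, SimpleGraph.induce, SimpleGraph.comap_adj,
      Function.Embedding.coe_subtype]
    rw [hlo a b i hi, hlo a b j hj, hlo a b' i hi, hlo a b' j hj]
  set b₀ : {i : Fin n // ¬ (i:ℕ) < r} → KeyRing P K := fun _ => ⟨T0, hT0⟩ with hb0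
  set CA : ({i : Fin n // (i:ℕ) < r} → KeyRing P K) → Prop :=
    fun a => ((rkg (e.symm (a, b₀))).induce {i : Fin n | (i:ℕ) < r}).Connected with hCA
  -- counting identity
  have hcount : ∀ (E : (Fin n → KeyRing P K) → Prop) [DecidablePred E],
      ((univ.filter (fun κ => E κ)).card : ℕ)
      = ∑ a : {i : Fin n // (i:ℕ) < r} → KeyRing P K,
        ∑ b : {i : Fin n // ¬ (i:ℕ) < r} → KeyRing P K,
          (if E (e.symm (a,b)) then 1 else 0) := by
    intro E _
    rw [Finset.card_filter]
    rw [← Equiv.sum_comp e.symm (fun κ => if E κ then 1 else 0)]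
    rw [Fintype.sum_prod_type]
  have hcardL : Fintype.card {i : Fin n // (i:ℕ) < r} = r := by
    have eqv : {i : Fin n // (i : ℕ) < r} ≃ Fin r :=
      { toFun := fun s => ⟨s.1.1, s.2⟩
        invFun := fun t => ⟨⟨t.1, lt_trans t.2 hrn'⟩, t.2⟩
        left_inv := fun s => rfl
        right_inv := fun t => rfl }
    rw [Fintype.card_congr eqv, Fintype.card_fin]
  have hcardH : Fintype.card {i : Fin n // ¬ (i:ℕ) < r} = m := by
    rw [Fintype.card_subtype_compl, hcardL, Fintype.card_fin]
  have hNm : Fintype.card ({i : Fin n // ¬ (i:ℕ) < r} → KeyRing P K) = N ^ m := by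
    rw [Fintype.card_fun, card_keyring, hcardH]
  -- isolation count for fixed low part
  have hiso : ∀ (a : {i : Fin n // (i:ℕ) < r} → KeyRing P K)
      [inst : ∀ b : {i : Fin n // ¬ (i:ℕ) < r} → KeyRing P K,
        Decidable (∀ i j : Fin n, (i:ℕ) < r → r ≤ (j:ℕ) →
          ((e.symm (a,b)) i).1 ∩ ((e.symm (a,b)) j).1 = ∅)],
      (∑ b : {i : Fin n // ¬ (i:ℕ) < r} → KeyRing P K,
      if (∀ i j : Fin n, (i:ℕ) < r → r ≤ (j:ℕ) →
        ((e.symm (a,b)) i).1 ∩ ((e.symm (a,b)) j).1 = ∅) then (1:ℕ) else 0)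
      = (P - u a).choose K ^ m := by
    intro a inst
    rw [← Finset.card_filter]
    have hQ : ∀ b : {i : Fin n // ¬ (i:ℕ) < r} → KeyRing P K,
        (∀ i j : Fin n, (i:ℕ) < r → r ≤ (j:ℕ) →
          ((e.symm (a,b)) i).1 ∩ ((e.symm (a,b)) j).1 = ∅)
        ↔ (∀ j : {i : Fin n // ¬ (i:ℕ) < r},
            ((b j).1 ∩ (univ.biUnion fun i : {i : Fin n // (i:ℕ) < r} => (a i).1)) = ∅) := by
      intro b
      constructor
      · intro h j
        rw [← Finset.disjoint_iff_inter_eq_empty, Finset.disjoint_biUnion_right]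
        intro i _
        have hj : r ≤ (j.1:ℕ) := not_lt.1 j.2
        have := h i.1 j.1 i.2 hj
        rw [hlo a b i.1 i.2, hhi a b j.1 j.2] at this
        rw [Finset.disjoint_iff_inter_eq_empty, Finset.inter_comm]
        simpa using this
      · intro h i j hi hj
        rw [hlo a b i hi, hhi a b j (not_lt.2 hj)]
        have := h ⟨j, not_lt.2 hj⟩
        rw [← Finset.disjoint_iff_inter_eq_empty, Finset.disjoint_biUnion_right] at this
        have := this ⟨i, hi⟩ (mem_univ _)
        rw [Finset.disjoint_iff_inter_eq_empty, Finset.inter_comm] at this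
        exact this
    rw [Finset.filter_congr (fun b _ => by rw [hQ b])]
    rw [card_pi_filter (fun S : KeyRing P K =>
      S.1 ∩ (univ.biUnion fun i : {i : Fin n // (i:ℕ) < r} => (a i).1) = ∅)]
    rw [card_disjoint_rings, hcardH]
  -- sum of a constant over high part
  have hsum1 : ∀ (Pp : ({i : Fin n // (i:ℕ) < r} → KeyRing P K) → Prop)
      [DecidablePred Pp],
      (∑ a, ∑ _b : {i : Fin n // ¬ (i:ℕ) < r} → KeyRing P K,
        if Pp a then (1:ℕ) else 0)
      = ∑ a, (if Pp a then N ^ m else 0) := by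
    intro Pp _
    refine Finset.sum_congr rfl fun a _ => ?_
    rw [Finset.sum_const, Finset.card_univ, hNm]
    by_cases h : Pp a <;> simp [h]
  -- the three counts
  have hcU : ((univ.filter (fun κ : Fin n → KeyRing P K =>
      ((univ.filter (fun i : Fin n => (i:ℕ) < r)).biUnion (fun i => (κ i).1)).card ≤ x)).card : ℕ)
      = ∑ a, (if u a ≤ x then N ^ m else 0) := by
    rw [hcount]
    rw [show (∑ a : {i : Fin n // (i:ℕ) < r} → KeyRing P K,
        ∑ b : {i : Fin n // ¬ (i:ℕ) < r} → KeyRing P K,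
        if ((univ.filter (fun i : Fin n => (i:ℕ) < r)).biUnion
            (fun i => ((e.symm (a,b)) i).1)).card ≤ x then (1:ℕ) else 0)
      = ∑ a, ∑ _b : {i : Fin n // ¬ (i:ℕ) < r} → KeyRing P K,
        if u a ≤ x then (1:ℕ) else 0 from
      Finset.sum_congr rfl fun a _ => Finset.sum_congr rfl fun b _ => by
        rw [hUa a b]]
    exact hsum1 _
  have hcC : ((univ.filter (fun κ : Fin n → KeyRing P K =>
      ((rkg κ).induce {i : Fin n | (i:ℕ) < r}).Connected)).card : ℕ)
      = ∑ a, (if CA a then N ^ m else 0) := by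
    rw [hcount]
    rw [show (∑ a : {i : Fin n // (i:ℕ) < r} → KeyRing P K,
        ∑ b : {i : Fin n // ¬ (i:ℕ) < r} → KeyRing P K,
        if ((rkg (e.symm (a,b))).induce {i : Fin n | (i:ℕ) < r}).Connected
          then (1:ℕ) else 0)
      = ∑ a, ∑ _b : {i : Fin n // ¬ (i:ℕ) < r} → KeyRing P K,
        if CA a then (1:ℕ) else 0 from
      Finset.sum_congr rfl fun a _ => Finset.sum_congr rfl fun b _ =>
        if_congr (by simp only [hCA]; rw [hgr a b b₀]) rfl rfl]
    exact hsum1 _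
  -- bound for the main count
  have hcA : ((univ.filter (fun κ : Fin n → KeyRing P K =>
      ((rkg κ).induce {i : Fin n | (i:ℕ) < r}).Connected ∧
      ∀ i j : Fin n, (i:ℕ) < r → r ≤ (j:ℕ) → (κ i).1 ∩ (κ j).1 = ∅)).card : ℕ)
      ≤ ∑ a, ((if u a ≤ x then (P - u a).choose K ^ m else 0)
            + (if CA a ∧ x < u a then (P - u a).choose K ^ m else 0)) := by
    rw [hcount]
    apply Finset.sum_le_sum
    intro a _
    have key : ∀ b : {i : Fin n // ¬ (i:ℕ) < r} → KeyRing P K,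
        (if (((rkg (e.symm (a,b))).induce {i : Fin n | (i:ℕ) < r}).Connected ∧
          ∀ i j : Fin n, (i:ℕ) < r → r ≤ (j:ℕ) →
            ((e.symm (a,b)) i).1 ∩ ((e.symm (a,b)) j).1 = ∅) then (1:ℕ) else 0)
        ≤ (if u a ≤ x then
             (if (∀ i j : Fin n, (i:ℕ) < r → r ≤ (j:ℕ) →
               ((e.symm (a,b)) i).1 ∩ ((e.symm (a,b)) j).1 = ∅) then (1:ℕ) else 0) else 0)
          + (if CA a ∧ x < u a then
             (if (∀ i j : Fin n, (i:ℕ) < r → r ≤ (j:ℕ) →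
               ((e.symm (a,b)) i).1 ∩ ((e.symm (a,b)) j).1 = ∅) then (1:ℕ) else 0) else 0) := by
      intro b
      by_cases hA : (((rkg (e.symm (a,b))).induce {i : Fin n | (i:ℕ) < r}).Connected ∧
          ∀ i j : Fin n, (i:ℕ) < r → r ≤ (j:ℕ) →
            ((e.symm (a,b)) i).1 ∩ ((e.symm (a,b)) j).1 = ∅)
      · have hIso := hA.2
        have hCa : CA a := by simp only [hCA]; rw [← hgr a b b₀]; exact hA.1
        rw [if_pos hA, if_pos hIso]
        by_cases hux : u a ≤ x
        · rw [if_pos hux]; exact Nat.le_add_right _ _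
        · have hcond : CA a ∧ x < u a := ⟨hCa, not_le.1 hux⟩
          rw [if_pos hcond]
          exact Nat.le_add_left _ _
      · rw [if_neg hA]; exact Nat.zero_le _
    calc (∑ b : {i : Fin n // ¬ (i:ℕ) < r} → KeyRing P K,
        if (((rkg (e.symm (a,b))).induce {i : Fin n | (i:ℕ) < r}).Connected ∧
          ∀ i j : Fin n, (i:ℕ) < r → r ≤ (j:ℕ) →
            ((e.symm (a,b)) i).1 ∩ ((e.symm (a,b)) j).1 = ∅) then (1:ℕ) else 0)
        ≤ ∑ b : {i : Fin n // ¬ (i:ℕ) < r} → KeyRing P K,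
          ((if u a ≤ x then
             (if (∀ i j : Fin n, (i:ℕ) < r → r ≤ (j:ℕ) →
               ((e.symm (a,b)) i).1 ∩ ((e.symm (a,b)) j).1 = ∅) then (1:ℕ) else 0) else 0)
          + (if CA a ∧ x < u a then
             (if (∀ i j : Fin n, (i:ℕ) < r → r ≤ (j:ℕ) →
               ((e.symm (a,b)) i).1 ∩ ((e.symm (a,b)) j).1 = ∅) then (1:ℕ) else 0) else 0)) :=
        Finset.sum_le_sum fun b _ => key b
      _ = (if u a ≤ x then (P - u a).choose K ^ m else 0)
            + (if CA a ∧ x < u a then (P - u a).choose K ^ m else 0) := by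
        rw [Finset.sum_add_distrib]
        congr 1
        · by_cases h : u a ≤ x
          · simp only [if_pos h]; exact hiso a
          · simp [h]
        · by_cases h : CA a ∧ x < u a
          · simp only [if_pos h]; exact hiso a
          · simp [h]
  -- real-valued bounds
  have hP' : (0:ℝ) < P := by exact_mod_cast hP
  set E1 : ℝ := Real.exp (-((m:ℝ) * K * K / P)) with hE1def
  set E2 : ℝ := Real.exp (-((m:ℝ) * K * (x+1) / P)) with hE2def
  have hreal1 : ∀ a, (((if u a ≤ x then (P - u a).choose K ^ m else 0 : ℕ)) : ℝ)
      ≤ (if u a ≤ x then ((N:ℝ)) ^ m else 0) * E1 := by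
    intro a
    by_cases h : u a ≤ x
    · simp only [if_pos h]
      push_cast
      calc ((P - u a).choose K : ℝ) ^ m
          ≤ (N:ℝ)^m * Real.exp (-((m:ℝ) * K * (u a) / P)) := by
            exact_mod_cast choose_pow_le_exp m hP (huP a)
        _ ≤ (N:ℝ)^m * E1 := by
            apply mul_le_mul_of_nonneg_left _ (by positivity)
            rw [hE1def]
            apply Real.exp_le_exp.2
            have hKu : (K:ℝ) ≤ u a := by exact_mod_cast huK a
            have h1 : (m:ℝ) * K * K / P ≤ (m:ℝ) * K * (u a) / P := by
              gcongr
            linarith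
    · simp [h]
  have hreal2 : ∀ a, (((if CA a ∧ x < u a then (P - u a).choose K ^ m else 0 : ℕ)) : ℝ)
      ≤ (if CA a then ((N:ℝ)) ^ m else 0) * E2 := by
    intro a
    by_cases h : CA a ∧ x < u a
    · simp only [if_pos h, if_pos h.1]
      push_cast
      calc ((P - u a).choose K : ℝ) ^ m
          ≤ (N:ℝ)^m * Real.exp (-((m:ℝ) * K * (u a) / P)) := by
            exact_mod_cast choose_pow_le_exp m hP (huP a)
        _ ≤ (N:ℝ)^m * E2 := by
            apply mul_le_mul_of_nonneg_left _ (by positivity)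
            rw [hE2def]
            apply Real.exp_le_exp.2
            have hxu : ((x:ℝ) + 1) ≤ u a := by
              have : x + 1 ≤ u a := h.2
              exact_mod_cast this
            have h1 : (m:ℝ) * K * (x+1) / P ≤ (m:ℝ) * K * (u a) / P := by
              gcongr
            linarith
    · rw [if_neg h]
      by_cases hc : CA a
      · simp only [if_pos hc, Nat.cast_zero]
        positivity
      · simp [hc]
  -- assemble the main real inequality between counts
  have hmain : (((univ.filter (fun κ : Fin n → KeyRing P K =>
      ((rkg κ).induce {i : Fin n | (i:ℕ) < r}).Connected ∧
      ∀ i j : Fin n, (i:ℕ) < r → r ≤ (j:ℕ) → (κ i).1 ∩ (κ j).1 = ∅)).card : ℕ) : ℝ)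
      ≤ (((univ.filter (fun κ : Fin n → KeyRing P K =>
          ((univ.filter (fun i : Fin n => (i:ℕ) < r)).biUnion
            (fun i => (κ i).1)).card ≤ x)).card : ℕ) : ℝ) * E1
        + (((univ.filter (fun κ : Fin n → KeyRing P K =>
          ((rkg κ).induce {i : Fin n | (i:ℕ) < r}).Connected)).card : ℕ) : ℝ) * E2 := by
    have c1 : (((univ.filter (fun κ : Fin n → KeyRing P K =>
        ((rkg κ).induce {i : Fin n | (i:ℕ) < r}).Connected ∧
        ∀ i j : Fin n, (i:ℕ) < r → r ≤ (j:ℕ) → (κ i).1 ∩ (κ j).1 = ∅)).card : ℕ) : ℝ)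
        ≤ ∑ a, ((((if u a ≤ x then (P - u a).choose K ^ m else 0 : ℕ)) : ℝ)
              + (((if CA a ∧ x < u a then (P - u a).choose K ^ m else 0 : ℕ)) : ℝ)) := by
      have := hcA
      calc (((univ.filter (fun κ : Fin n → KeyRing P K =>
          ((rkg κ).induce {i : Fin n | (i:ℕ) < r}).Connected ∧
          ∀ i j : Fin n, (i:ℕ) < r → r ≤ (j:ℕ) → (κ i).1 ∩ (κ j).1 = ∅)).card : ℕ) : ℝ)
          ≤ ((∑ a, ((if u a ≤ x then (P - u a).choose K ^ m else 0)
            + (if CA a ∧ x < u a then (P - u a).choose K ^ m else 0)) : ℕ) : ℝ) := by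
            exact_mod_cast hcA
        _ = ∑ a, ((((if u a ≤ x then (P - u a).choose K ^ m else 0 : ℕ)) : ℝ)
              + (((if CA a ∧ x < u a then (P - u a).choose K ^ m else 0 : ℕ)) : ℝ)) := by
            push_cast; rfl
    calc (((univ.filter (fun κ : Fin n → KeyRing P K =>
        ((rkg κ).induce {i : Fin n | (i:ℕ) < r}).Connected ∧
        ∀ i j : Fin n, (i:ℕ) < r → r ≤ (j:ℕ) → (κ i).1 ∩ (κ j).1 = ∅)).card : ℕ) : ℝ)
        ≤ ∑ a, ((((if u a ≤ x then (P - u a).choose K ^ m else 0 : ℕ)) : ℝ)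
              + (((if CA a ∧ x < u a then (P - u a).choose K ^ m else 0 : ℕ)) : ℝ)) := c1
      _ ≤ ∑ a, ((if u a ≤ x then ((N:ℝ)) ^ m else 0) * E1
              + (if CA a then ((N:ℝ)) ^ m else 0) * E2) := by
          apply Finset.sum_le_sum
          intro a _
          exact add_le_add (hreal1 a) (hreal2 a)
      _ = (∑ a, (if u a ≤ x then ((N:ℝ)) ^ m else 0)) * E1
            + (∑ a, (if CA a then ((N:ℝ)) ^ m else 0)) * E2 := by
          rw [Finset.sum_add_distrib, Finset.sum_mul, Finset.sum_mul]
      _ = (((univ.filter (fun κ : Fin n → KeyRing P K =>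
          ((univ.filter (fun i : Fin n => (i:ℕ) < r)).biUnion
            (fun i => (κ i).1)).card ≤ x)).card : ℕ) : ℝ) * E1
        + (((univ.filter (fun κ : Fin n → KeyRing P K =>
          ((rkg κ).induce {i : Fin n | (i:ℕ) < r}).Connected)).card : ℕ) : ℝ) * E2 := by
          rw [hcU, hcC]
          push_cast
          rfl
  -- finish: divide by the total count
  have hTpos : (0:ℝ) < (Fintype.card (Fin n → KeyRing P K) : ℝ) := by
    have : 0 < Fintype.card (Fin n → KeyRing P K) :=
      Fintype.card_pos_iff.2 ⟨fun _ => ⟨T0, hT0⟩⟩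
    exact_mod_cast this
  have hmcast : (m:ℝ) = (n:ℝ) - r := by
    rw [hm]; push_cast [Nat.cast_sub hrn2]; ring
  have hE1eq : Real.exp (-(((n : ℝ) - (r : ℝ)) * (K : ℝ) ^ 2 / (P : ℝ))) = E1 := by
    rw [hE1def]
    exact congrArg Real.exp (by rw [hmcast]; ring)
  have hE2eq : Real.exp (-(((n : ℝ) - (r : ℝ)) * ((K : ℝ) / (P : ℝ)) * ((x : ℝ) + 1))) = E2 := by
    rw [hE2def]
    exact congrArg Real.exp (by rw [hmcast]; field_simp)
  unfold pr
  simp only [Finset.filter_congr_decidable]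
  rw [hE1eq, hE2eq]
  rw [div_mul_eq_mul_div, div_mul_eq_mul_div, ← add_div]
  have hgoal := div_le_div_of_nonneg_right hmain hTpos.le
  convert hgoal using 6 <;> exact Finset.filter_congr_decidable _ _ _
end

section
/- Let K_n, P_n be a scaling with K_n ≤ P_n and deviation function α_n defined by K_n²/P_n = (log n + α_n)/n. Suppose lim_{n→∞} α_n = ∞ and P_n ≥ σn for some σ > 0 and all large n. Define α*_n = min(α_n, log n), K*_n = √(P_n (log n + α*_n)/n), and K̃_n = ⌈K*_n⌉, P̃_n = P_n. Then K̃_n ≤ K_n, K̃_n ≥ 2 for all large n, and the deviation function α̃_n of the new scaling (defined by K̃_n²/P̃_n = (log n + α̃_n)/n) satisfies lim α̃_n = ∞ and α̃_n = o(n). -/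
open Filter Asymptotics

/-- Reduction to strongly admissible scalings: given a scaling `K_n ≤ P_n` with
deviation `α_n → ∞` and `P_n ≥ σn`, the modified scaling
`K̃_n = ⌈√(P_n(log n + min(α_n, log n))/n)⌉` satisfies `K̃_n ≤ K_n`, `K̃_n ≥ 2`
eventually, and its deviation `α̃_n` satisfies `α̃_n → ∞` and `α̃_n = o(n)`. -/
theorem stmt15 (K P : ℕ → ℕ) (σ : ℝ) (hσ : 0 < σ)
    (hK : ∀ n, 0 < K n) (hKP : ∀ n, K n ≤ P n)
    (α : ℕ → ℝ) (hα : ∀ n : ℕ, α n = (n : ℝ) * (K n : ℝ) ^ 2 / (P n : ℝ) - Real.log n)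
    (hαtop : Tendsto α atTop atTop)
    (hPσ : ∀ᶠ n : ℕ in atTop, σ * (n : ℝ) ≤ (P n : ℝ))
    (αstar : ℕ → ℝ) (hαs : ∀ n, αstar n = min (α n) (Real.log n))
    (Kstar : ℕ → ℝ)
    (hKs : ∀ n, Kstar n = Real.sqrt ((P n : ℝ) * (Real.log n + αstar n) / (n : ℝ)))
    (Ktil : ℕ → ℕ) (hKt : ∀ n, Ktil n = ⌈Kstar n⌉₊)
    (αtil : ℕ → ℝ)
    (hαt : ∀ n : ℕ, αtil n = (n : ℝ) * (Ktil n : ℝ) ^ 2 / (P n : ℝ) - Real.log n) :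
    (∀ n, 1 ≤ n → Ktil n ≤ K n) ∧
    (∀ᶠ n in atTop, 2 ≤ Ktil n) ∧
    Tendsto αtil atTop atTop ∧
    (fun n => αtil n) =o[atTop] (fun n => (n : ℝ)) := by
  have hP : ∀ n, 0 < P n := fun n => lt_of_lt_of_le (hK n) (hKP n)
  have hPR : ∀ n, (0:ℝ) < (P n : ℝ) := fun n => by exact_mod_cast hP n
  have hlog : Tendsto (fun n : ℕ => Real.log n) atTop atTop :=
    Real.tendsto_log_atTop.comp tendsto_natCast_atTop_atTop
  have hKs0 : ∀ n, 0 ≤ Kstar n := fun n => by rw [hKs]; exact Real.sqrt_nonneg _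
  have hαstar_top : Tendsto αstar atTop atTop := by
    rw [tendsto_atTop]
    intro b
    filter_upwards [hαtop.eventually_ge_atTop b, hlog.eventually_ge_atTop b] with n h1 h2
    rw [hαs]; exact le_min h1 h2
  -- key identity
  have hid : ∀ n : ℕ, 1 ≤ n → (P n : ℝ) * (Real.log n + α n) / (n : ℝ) = (K n : ℝ) ^ 2 := by
    intro n hn
    have hn0 : (0:ℝ) < (n:ℝ) := by exact_mod_cast hn
    have hpne : (P n : ℝ) ≠ 0 := ne_of_gt (hPR n)
    have hnne : (n:ℝ) ≠ 0 := ne_of_gt hn0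
    rw [hα n]
    field_simp
    ring
  -- part 1
  have part1 : ∀ n, 1 ≤ n → Ktil n ≤ K n := by
    intro n hn
    rw [hKt, Nat.ceil_le, hKs]
    have hn0 : (0:ℝ) < (n:ℝ) := by exact_mod_cast hn
    have hle : (P n : ℝ) * (Real.log n + αstar n) / (n:ℝ)
        ≤ (P n : ℝ) * (Real.log n + α n) / (n:ℝ) := by
      gcongr
      rw [hαs]; exact min_le_left _ _
    calc Real.sqrt ((P n : ℝ) * (Real.log n + αstar n) / (n:ℝ))
        ≤ Real.sqrt ((K n : ℝ)^2) := Real.sqrt_le_sqrt (by rw [← hid n hn]; exact hle)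
      _ = (K n : ℝ) := Real.sqrt_sq (by positivity)
  refine ⟨part1, ?_, ?_, ?_⟩
  · -- eventually 2 ≤ Ktil
    filter_upwards [hPσ, hαstar_top.eventually_ge_atTop (4/σ),
      eventually_ge_atTop 1] with n h1 h2 h3
    have hn0 : (0:ℝ) < (n:ℝ) := by exact_mod_cast h3
    have hlogn : (0:ℝ) ≤ Real.log n := Real.log_natCast_nonneg n
    have h4 : (4:ℝ) ≤ (P n : ℝ) * (Real.log n + αstar n) / (n:ℝ) := by
      rw [le_div_iff₀ hn0]
      have : σ * (n:ℝ) * (4/σ) ≤ (P n : ℝ) * (Real.log n + αstar n) := by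
        apply mul_le_mul h1 (by linarith) (by positivity) (hPR n).le
      calc (4:ℝ) * (n:ℝ) = σ * (n:ℝ) * (4/σ) := by field_simp
        _ ≤ _ := this
    have : (2:ℝ) ≤ Kstar n := by
      rw [hKs, show (2:ℝ) = Real.sqrt 4 by rw [show (4:ℝ) = 2^2 by norm_num, Real.sqrt_sq]; norm_num]
      exact Real.sqrt_le_sqrt h4
    have : (2:ℝ) ≤ (Ktil n : ℝ) := by
      rw [hKt]; exact le_trans this (Nat.le_ceil _)
    exact_mod_cast this
  · -- tendsto αtil atTop
    rw [tendsto_atTop]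
    intro b
    filter_upwards [hαstar_top.eventually_ge_atTop (max b 0), eventually_ge_atTop 1] with n h1 h2
    have hn0 : (0:ℝ) < (n:ℝ) := by exact_mod_cast h2
    have hlogn : (0:ℝ) ≤ Real.log n := Real.log_natCast_nonneg n
    have hA : 0 ≤ Real.log n + αstar n := by
      have := le_trans (le_max_right b 0) h1; linarith
    have hsq : Kstar n ^ 2 = (P n : ℝ) * (Real.log n + αstar n) / (n:ℝ) := by
      rw [hKs]; exact Real.sq_sqrt (by positivity)
    have hlt : Kstar n ≤ (Ktil n : ℝ) := by rw [hKt]; exact Nat.le_ceil _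
    have hsqle : Kstar n ^ 2 ≤ (Ktil n : ℝ) ^ 2 := by
      apply pow_le_pow_left₀ (hKs0 n) hlt
    have key : Real.log n + αstar n ≤ (n:ℝ) * (Ktil n : ℝ)^2 / (P n : ℝ) := by
      rw [le_div_iff₀ (hPR n)]
      have := hsqle
      rw [hsq, div_le_iff₀ hn0] at this
      nlinarith [this]
    rw [hαt]
    have := le_trans (le_max_left b 0) h1
    linarith
  · -- little o
    set C : ℝ := 1 + 2 * Real.sqrt (2/σ) with hC
    have hC0 : 0 ≤ C := by positivity
    have hno : Tendsto (fun n : ℕ => ‖(n:ℝ)‖) atTop atTop := by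
      simpa [Real.norm_natCast] using (tendsto_natCast_atTop_atTop (R := ℝ))
    have hlogo : (fun n : ℕ => Real.log n) =o[atTop] (fun n : ℕ => (n:ℝ)) :=
      Real.isLittleO_log_id_atTop.comp_tendsto tendsto_natCast_atTop_atTop
    have hconst : (fun _ : ℕ => (1/σ : ℝ)) =o[atTop] (fun n : ℕ => (n:ℝ)) :=
      Asymptotics.isLittleO_const_left.mpr (Or.inr hno)
    have hho : (fun n : ℕ => C * Real.log n + 1/σ) =o[atTop] (fun n : ℕ => (n:ℝ)) :=
      (hlogo.const_mul_left C).add hconst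
    refine IsBigO.trans_isLittleO ?_ hho
    rw [isBigO_iff]
    refine ⟨1, ?_⟩
    filter_upwards [hPσ, hαstar_top.eventually_ge_atTop 0,
      hlog.eventually_ge_atTop 1, eventually_ge_atTop 1] with n hσn hα0 hlog1 hn1
    have hn0 : (0:ℝ) < (n:ℝ) := by exact_mod_cast hn1
    have hA : 0 ≤ Real.log n + αstar n := by linarith
    have hAle : Real.log n + αstar n ≤ 2 * Real.log n := by
      have := min_le_right (α n) (Real.log n); rw [← hαs] at this; linarith
    have hsq : Kstar n ^ 2 = (P n : ℝ) * (Real.log n + αstar n) / (n:ℝ) := by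
      rw [hKs]; exact Real.sq_sqrt (by positivity)
    have hlt : Kstar n ≤ (Ktil n : ℝ) := by rw [hKt]; exact Nat.le_ceil _
    -- lower bound : αstar n ≤ αtil n
    have hlow : αstar n ≤ αtil n := by
      have hsqle : Kstar n ^ 2 ≤ (Ktil n : ℝ) ^ 2 := pow_le_pow_left₀ (hKs0 n) hlt 2
      have key : Real.log n + αstar n ≤ (n:ℝ) * (Ktil n : ℝ)^2 / (P n : ℝ) := by
        rw [le_div_iff₀ (hPR n)]
        have := hsqle
        rw [hsq, div_le_iff₀ hn0] at this
        nlinarith [this]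
      rw [hαt]; linarith
    -- upper bound
    have hq : (n:ℝ) / (P n : ℝ) ≤ 1/σ := by
      rw [div_le_div_iff₀ (hPR n) hσ]
      nlinarith [hσn]
    have hcl : (Ktil n : ℝ) ≤ Kstar n + 1 := by
      rw [hKt]; exact (Nat.ceil_lt_add_one (hKs0 n)).le
    have hKt0 : (0:ℝ) ≤ (Ktil n : ℝ) := by positivity
    have hsqle2 : (Ktil n : ℝ)^2 ≤ (Kstar n + 1)^2 := pow_le_pow_left₀ hKt0 hcl 2
    -- t := n/P * Kstar
    set t : ℝ := (n:ℝ) / (P n : ℝ) * Kstar n with ht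
    have ht0 : 0 ≤ t := by
      apply mul_nonneg (by positivity) (hKs0 n)
    have htsq : t^2 ≤ 2 * Real.log n / σ := by
      have : t^2 = ((n:ℝ) / (P n : ℝ)) * ((n:ℝ) / (P n : ℝ) * Kstar n ^2) := by ring
      rw [this, hsq]
      have hpne : (P n : ℝ) ≠ 0 := ne_of_gt (hPR n)
      have hnne : (n:ℝ) ≠ 0 := ne_of_gt hn0
      have h1 : (n:ℝ) / (P n : ℝ) * ((P n : ℝ) * (Real.log n + αstar n) / (n:ℝ))
          = Real.log n + αstar n := by field_simp
      rw [h1]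
      calc (n:ℝ) / (P n : ℝ) * (Real.log n + αstar n) ≤ (1/σ) * (2 * Real.log n) := by
            apply mul_le_mul hq hAle hA (by positivity)
        _ = 2 * Real.log n / σ := by ring
    have htle : t ≤ Real.sqrt (2/σ) * Real.log n := by
      have h1 : t ≤ Real.sqrt (2 * Real.log n / σ) := by
        rw [Real.le_sqrt ht0 (by positivity)]
        exact htsq
      have h2 : Real.sqrt (2 * Real.log n / σ) = Real.sqrt (2/σ) * Real.sqrt (Real.log n) := by
        rw [← Real.sqrt_mul (by positivity)]
        ring_nf
      have h3 : Real.sqrt (Real.log n) ≤ Real.log n := by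
        calc Real.sqrt (Real.log n) ≤ Real.sqrt ((Real.log n)^2) :=
              Real.sqrt_le_sqrt (by nlinarith)
          _ = Real.log n := Real.sqrt_sq (by linarith)
      calc t ≤ Real.sqrt (2 * Real.log n / σ) := h1
        _ = Real.sqrt (2/σ) * Real.sqrt (Real.log n) := h2
        _ ≤ Real.sqrt (2/σ) * Real.log n := by
            apply mul_le_mul_of_nonneg_left h3 (Real.sqrt_nonneg _)
    have hup : αtil n ≤ C * Real.log n + 1/σ := by
      rw [hαt]
      have h1 : (n:ℝ) * (Ktil n : ℝ)^2 / (P n : ℝ) ≤ (n:ℝ) * (Kstar n + 1)^2 / (P n : ℝ) := by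
        gcongr
      have hpne' : (P n : ℝ) ≠ 0 := ne_of_gt (hPR n)
      have h2 : (n:ℝ) * (Kstar n + 1)^2 / (P n : ℝ)
          = (n:ℝ) * Kstar n^2 / (P n : ℝ) + 2 * t + (n:ℝ)/(P n : ℝ) := by
        rw [ht]; field_simp; ring
      have hpne : (P n : ℝ) ≠ 0 := ne_of_gt (hPR n)
      have hnne : (n:ℝ) ≠ 0 := ne_of_gt hn0
      have h3 : (n:ℝ) * Kstar n^2 / (P n : ℝ) = Real.log n + αstar n := by
        rw [hsq]; field_simp
      have h4 : αstar n ≤ Real.log n := by rw [hαs]; exact min_le_right _ _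
      have : (n:ℝ) * (Ktil n : ℝ)^2 / (P n : ℝ)
          ≤ Real.log n + αstar n + 2 * t + 1/σ := by
        rw [h2, h3] at h1; linarith
      rw [hC]
      linarith [htle, h4, this]
    have hrhs0 : 0 ≤ C * Real.log n + 1/σ := by
      have h10 : (0:ℝ) < 1/σ := by positivity
      have h11 : 0 ≤ C * Real.log n := mul_nonneg hC0 (by linarith)
      linarith
    have habs : ‖αtil n‖ = αtil n := by
      rw [Real.norm_eq_abs, abs_of_nonneg (le_trans hα0 hlow)]
    rw [habs, Real.norm_eq_abs, abs_of_nonneg hrhs0, one_mul]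
    exact hup
end

section
/- Let K, P, n be positive integers with 2 ≤ K ≤ P and 2K ≤ P, and let K_1,…,K_r be i.i.d. uniformly random K-subsets of {1,…,P} with U_r = |K_1 ∪ ⋯ ∪ K_r|. Then for every μ ∈ (0, 1/2), Σ_{r = r_n+1}^{⌊n/2⌋} C(n, r)·P[U_r ≤ ⌊μP⌋]·exp(-(n-r)K²/P) ≤ (2 e^{-K²/(2P)})^n · (√μ · (e/μ)^μ)^P, where r_n = min(⌊P/K⌋ - 1, ⌊n/2⌋). -/
open Finset

lemma count_sub (r P K : ℕ) (S : Finset (Fin P)) :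
    (Finset.univ.filter (fun κ : Fin r → KeyRing P K => ∀ i, (κ i).1 ⊆ S)).card
      = (S.card.choose K) ^ r := by
  classical
  have h2 : (Finset.univ.filter (fun T : KeyRing P K => T.1 ⊆ S)).card = S.card.choose K := by
    rw [← Finset.card_powersetCard K S]
    apply Finset.card_bij (fun T _ => T.1)
    · intro T hT
      simp only [Finset.mem_filter, Finset.mem_univ, true_and] at hT
      exact Finset.mem_powersetCard.2 ⟨hT, T.2⟩
    · intro a _ b _ h; exact Subtype.ext h
    · intro u hu
      obtain ⟨h1, h2⟩ := Finset.mem_powersetCard.1 hu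
      exact ⟨⟨u, h2⟩, by simp [h1], rfl⟩
  have h1 : Finset.univ.filter (fun κ : Fin r → KeyRing P K => ∀ i, (κ i).1 ⊆ S)
      = Fintype.piFinset (fun _ : Fin r => Finset.univ.filter (fun T : KeyRing P K => T.1 ⊆ S)) := by
    ext κ
    simp [Fintype.mem_piFinset]
  rw [h1, Fintype.card_piFinset]
  simp [h2]

lemma count_bound (r P K m : ℕ) (hm : m ≤ P) :
    ((Finset.univ : Finset (Fin r → KeyRing P K)).filter
      (fun κ => (Finset.univ.biUnion (fun i => (κ i).1)).card ≤ m)).card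
      ≤ P.choose m * (m.choose K) ^ r := by
  classical
  have hsub : ((Finset.univ : Finset (Fin r → KeyRing P K)).filter
      (fun κ => (Finset.univ.biUnion (fun i => (κ i).1)).card ≤ m)) ⊆
      (Finset.univ.powersetCard m).biUnion
        (fun S => Finset.univ.filter (fun κ : Fin r → KeyRing P K => ∀ i, (κ i).1 ⊆ S)) := by
    intro κ hκ
    simp only [Finset.mem_filter, Finset.mem_univ, true_and] at hκ
    obtain ⟨S, hS1, hS2⟩ := Finset.exists_superset_card_eq hκ (by simpa using hm)
    refine Finset.mem_biUnion.2 ⟨S, ?_, ?_⟩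
    · simp [Finset.mem_powersetCard_univ, hS2]
    · simp only [Finset.mem_filter, Finset.mem_univ, true_and]
      intro i
      exact (Finset.subset_biUnion_of_mem _ (Finset.mem_univ i)).trans hS1
  calc ((Finset.univ : Finset (Fin r → KeyRing P K)).filter
      (fun κ => (Finset.univ.biUnion (fun i => (κ i).1)).card ≤ m)).card
      ≤ ((Finset.univ.powersetCard m).biUnion
        (fun S => Finset.univ.filter (fun κ : Fin r → KeyRing P K => ∀ i, (κ i).1 ⊆ S))).card :=
        Finset.card_le_card hsub
    _ ≤ ∑ S ∈ Finset.univ.powersetCard m,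
        (Finset.univ.filter (fun κ : Fin r → KeyRing P K => ∀ i, (κ i).1 ⊆ S)).card :=
        Finset.card_biUnion_le
    _ = ∑ S ∈ Finset.univ.powersetCard m, (m.choose K) ^ r := by
        apply Finset.sum_congr rfl
        intro S hS
        rw [count_sub, (Finset.mem_powersetCard_univ.1 hS)]
    _ = P.choose m * (m.choose K) ^ r := by
        rw [Finset.sum_const, Finset.card_powersetCard, Finset.card_univ, Fintype.card_fin,
          smul_eq_mul]

lemma choose_ratio (m P K : ℕ) (hm : m ≤ P) :
    m.choose K * P ^ K ≤ P.choose K * m ^ K := by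
  have key : m.descFactorial K * P ^ K ≤ P.descFactorial K * m ^ K := by
    rw [Nat.descFactorial_eq_prod_range, Nat.descFactorial_eq_prod_range]
    have h1 : P ^ K = ∏ _i ∈ Finset.range K, P := by simp
    have h2 : m ^ K = ∏ _i ∈ Finset.range K, m := by simp
    rw [h1, h2, ← Finset.prod_mul_distrib, ← Finset.prod_mul_distrib]
    apply Finset.prod_le_prod'
    intro i _
    calc (m - i) * P = m * P - i * P := by rw [Nat.sub_mul]
      _ ≤ P * m - i * m := by
          rw [mul_comm m P]
          exact Nat.sub_le_sub_left (Nat.mul_le_mul_left i hm) _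
      _ = (P - i) * m := by rw [Nat.sub_mul]
  have hfac : 0 < K.factorial := K.factorial_pos
  have h3 : K.factorial * (m.choose K * P ^ K) ≤ K.factorial * (P.choose K * m ^ K) := by
    calc K.factorial * (m.choose K * P ^ K) = (K.factorial * m.choose K) * P ^ K := by ring
      _ = m.descFactorial K * P ^ K := by rw [← Nat.descFactorial_eq_factorial_mul_choose]
      _ ≤ P.descFactorial K * m ^ K := key
      _ = (K.factorial * P.choose K) * m ^ K := by rw [← Nat.descFactorial_eq_factorial_mul_choose]
      _ = K.factorial * (P.choose K * m ^ K) := by ring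
  exact Nat.le_of_mul_le_mul_left h3 hfac

lemma choose_le_e (P m : ℕ) (hm : 1 ≤ m) :
    (P.choose m : ℝ) ≤ (Real.exp 1 * P / m) ^ m := by
  have hm0 : (0:ℝ) < m := by exact_mod_cast hm
  have h1 : (P.choose m : ℝ) ≤ (P:ℝ) ^ m / m.factorial := Nat.choose_le_pow_div m P
  have h2 : (m:ℝ) ^ m / m.factorial ≤ Real.exp m :=
    Real.pow_div_factorial_le_exp (x := (m:ℝ)) (by positivity) m
  have hf : (0:ℝ) < m.factorial := by exact_mod_cast m.factorial_pos
  have h3 : (m:ℝ) ^ m ≤ Real.exp m * m.factorial := by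
    rw [div_le_iff₀ hf] at h2; linarith
  have hexp : Real.exp (m:ℝ) = Real.exp 1 ^ m := by
    rw [← Real.exp_nat_mul]; ring_nf
  calc (P.choose m : ℝ) ≤ (P:ℝ) ^ m / m.factorial := h1
    _ ≤ (Real.exp 1 * P / m) ^ m := by
        rw [div_le_iff₀ hf, div_pow, div_mul_eq_mul_div, le_div_iff₀ (by positivity)]
        calc (P:ℝ) ^ m * (m:ℝ) ^ m ≤ (P:ℝ)^m * (Real.exp m * m.factorial) := by
              apply mul_le_mul_of_nonneg_left h3 (by positivity)
          _ = (Real.exp 1 * P) ^ m * m.factorial := by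
              rw [hexp, mul_pow]; ring

lemma xlogx_mono {a b : ℝ} (ha : 0 < a) (hab : a ≤ b) (hb : b ≤ 1) :
    a - a * Real.log a ≤ b - b * Real.log b := by
  have hb0 : 0 < b := lt_of_lt_of_le ha hab
  have h1 : b * Real.log b - a * Real.log a
      = (b - a) * Real.log b + a * (Real.log b - Real.log a) := by ring
  have h2 : (b - a) * Real.log b ≤ 0 :=
    mul_nonpos_of_nonneg_of_nonpos (by linarith) (Real.log_nonpos (le_of_lt hb0) hb)
  have h3 : Real.log b - Real.log a = Real.log (b / a) :=
    (Real.log_div (ne_of_gt hb0) (ne_of_gt ha)).symm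
  have h4 : Real.log (b / a) ≤ b / a - 1 := Real.log_le_sub_one_of_pos (by positivity)
  have h5 : a * (Real.log b - Real.log a) ≤ b - a := by
    rw [h3]
    calc a * Real.log (b / a) ≤ a * (b / a - 1) := by
          apply mul_le_mul_of_nonneg_left h4 (le_of_lt ha)
      _ = b - a := by field_simp
  nlinarith [h1, h2, h5]

lemma h_mono {a b : ℝ} (ha : 0 < a) (hab : a ≤ b) (hb : b ≤ 1) :
    Real.sqrt a * (Real.exp 1 / a) ^ a ≤ Real.sqrt b * (Real.exp 1 / b) ^ b := by
  have hb0 : 0 < b := lt_of_lt_of_le ha hab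
  have key : ∀ x : ℝ, 0 < x → (Real.exp 1 / x) ^ x = Real.exp (x - x * Real.log x) := by
    intro x hx
    rw [Real.rpow_def_of_pos (by positivity), Real.log_div (Real.exp_ne_zero 1) (ne_of_gt hx),
      Real.log_exp]
    ring_nf
  rw [key a ha, key b hb0]
  exact mul_le_mul (Real.sqrt_le_sqrt hab) (Real.exp_le_exp.2 (xlogx_mono ha hab hb))
    (le_of_lt (Real.exp_pos _)) (Real.sqrt_nonneg b)

set_option maxHeartbeats 1000000 in
lemma pr_bound (r P K : ℕ) (hK : 2 ≤ K) (hKP : K ≤ P)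
    (μ : ℝ) (hμ0 : 0 < μ) (hμ2 : μ < 1/2) (hr1 : 1 ≤ r)
    (hrK : (P:ℝ)/2 ≤ (r:ℝ) * K) :
    pr r P K (fun κ => ((Finset.univ.biUnion (fun i => (κ i).1)).card ≤ ⌊μ * (P:ℝ)⌋₊))
      ≤ (Real.sqrt μ * (Real.exp 1 / μ) ^ μ) ^ P := by
  have hP : 0 < P := lt_of_lt_of_le (lt_of_lt_of_le two_pos hK) hKP
  have hPR : (0:ℝ) < P := by exact_mod_cast hP
  obtain ⟨m, hm_def⟩ : ∃ m, ⌊μ * (P:ℝ)⌋₊ = m := ⟨_, rfl⟩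
  rw [hm_def]
  have hmle : (m:ℝ) ≤ μ * P := hm_def ▸ Nat.floor_le (by positivity)
  have hmlt : (m:ℝ) < (P:ℝ)/2 := lt_of_le_of_lt hmle (by nlinarith)
  have hmP : m ≤ P := by
    have h : (m:ℝ) ≤ (P:ℝ) := le_of_lt (lt_of_lt_of_le hmlt (by linarith))
    exact_mod_cast h
  have hRHS : (0:ℝ) ≤ (Real.sqrt μ * (Real.exp 1 / μ) ^ μ) ^ P := by positivity
  rw [pr]
  rw [Finset.filter_congr_decidable (Finset.univ : Finset (Fin r → KeyRing P K))
    (fun κ => (Finset.univ.biUnion (fun i => (κ i).1)).card ≤ m) (fun κ => Classical.propDecidable _)]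
  have hfc : ((Finset.univ : Finset (Fin r → KeyRing P K)).filter
      (fun κ => (Finset.univ.biUnion (fun i => (κ i).1)).card ≤ m)).card
      ≤ P.choose m * (m.choose K) ^ r := count_bound r P K m hmP
  rcases Nat.eq_zero_or_pos m with hm0 | hm1
  · -- m = 0 : the filtered set is empty
    have hempty : ((Finset.univ : Finset (Fin r → KeyRing P K)).filter
        (fun κ => (Finset.univ.biUnion (fun i => (κ i).1)).card ≤ m)) = ∅ := by
      apply Finset.filter_eq_empty_iff.2
      intro κ _
      simp only [hm0, Nat.le_zero]
      have hsub : (κ ⟨0, hr1⟩).1 ⊆ Finset.univ.biUnion (fun i => (κ i).1) :=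
        Finset.subset_biUnion_of_mem (fun i => (κ i).1) (Finset.mem_univ _)
      intro hcard
      have h2 : ((κ ⟨0, hr1⟩).1).card = K := (κ ⟨0, hr1⟩).2
      have h3 := Finset.card_le_card hsub
      clear hfc hsub
      omega
    simp only [hempty, Finset.card_empty, Nat.cast_zero, zero_div]
    exact hRHS
  · -- main case
    have hchoosePK : 0 < P.choose K := Nat.choose_pos hKP
    have hC : (0:ℝ) < (P.choose K : ℝ) := by exact_mod_cast hchoosePK
    have htot : (Fintype.card (Fin r → KeyRing P K) : ℝ) = ((P.choose K : ℝ)) ^ r := by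
      simp [Fintype.card_fun, Fintype.card_finset_len]
    rw [htot]
    obtain ⟨t, ht_def⟩ : ∃ t : ℝ, t = (m:ℝ)/(P:ℝ) := ⟨_, rfl⟩
    have ht0 : 0 < t := by
      rw [ht_def]
      apply div_pos _ hPR
      exact_mod_cast hm1
    have htμ : t ≤ μ := by
      rw [ht_def, div_le_iff₀ hPR]; linarith
    have ht1 : t < 1 := lt_of_le_of_lt htμ (by linarith)
    have step1 : (((Finset.univ : Finset (Fin r → KeyRing P K)).filter
        (fun κ => (Finset.univ.biUnion (fun i => (κ i).1)).card ≤ m)).card : ℝ)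
        / ((P.choose K : ℝ)) ^ r
        ≤ (P.choose m : ℝ) * ((m.choose K : ℝ)/(P.choose K : ℝ)) ^ r := by
      rw [div_pow, ← mul_div_assoc]
      gcongr
      exact_mod_cast hfc
    refine le_trans step1 ?_
    have step2 : (m.choose K : ℝ)/(P.choose K : ℝ) ≤ t ^ K := by
      rw [ht_def, div_pow, div_le_div_iff₀ hC (by positivity), mul_comm (((m:ℝ))^K)]
      exact_mod_cast choose_ratio m P K hmP
    have step2' : ((m.choose K : ℝ)/(P.choose K : ℝ)) ^ r ≤ t ^ (K * r) := by
      rw [pow_mul]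
      exact pow_le_pow_left₀ (by positivity) step2 r
    have step3 : (P.choose m : ℝ) ≤ (Real.exp 1 / t) ^ m := by
      have h := choose_le_e P m hm1
      have heq : Real.exp 1 * P / m = Real.exp 1 / t := by
        rw [ht_def, div_div_eq_mul_div]
      rwa [heq] at h
    have hbase : (0:ℝ) < Real.exp 1 / t := by positivity
    calc (P.choose m : ℝ) * ((m.choose K : ℝ)/(P.choose K : ℝ)) ^ r
        ≤ (Real.exp 1 / t) ^ m * t ^ (K * r) :=
          mul_le_mul step3 step2' (by positivity) (by positivity)
      _ ≤ (Real.exp 1 / t) ^ m * t ^ ((P:ℝ)/2) := by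
          apply mul_le_mul_of_nonneg_left _ (by positivity)
          calc (t : ℝ) ^ (K * r) = t ^ ((K * r : ℕ) : ℝ) := by
                rw [Real.rpow_natCast]
            _ ≤ t ^ ((P:ℝ)/2) := by
                apply Real.rpow_le_rpow_of_exponent_ge ht0 (le_of_lt ht1)
                push_cast; linarith [hrK]
      _ = ((Real.exp 1 / t) ^ t) ^ P * (Real.sqrt t) ^ P := by
          have h1 : ((Real.exp 1 / t) ^ t) ^ P = (Real.exp 1 / t) ^ (m:ℕ) := by
            rw [← Real.rpow_natCast ((Real.exp 1 / t) ^ t) P, ← Real.rpow_mul (le_of_lt hbase),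
              ← Real.rpow_natCast (Real.exp 1 / t) m]
            congr 1
            rw [ht_def]; field_simp
          have h2 : (Real.sqrt t) ^ P = t ^ ((P:ℝ)/2) := by
            rw [Real.sqrt_eq_rpow, ← Real.rpow_natCast (t ^ ((1:ℝ)/2)) P,
              ← Real.rpow_mul (le_of_lt ht0)]
            congr 1; ring
          rw [h1, h2]
      _ = (Real.sqrt t * (Real.exp 1 / t) ^ t) ^ P := by rw [← mul_pow]; ring_nf
      _ ≤ (Real.sqrt μ * (Real.exp 1 / μ) ^ μ) ^ P := by
          apply pow_le_pow_left₀ (by positivity)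
          exact h_mono ht0 htμ (by linarith)

lemma pr_nonneg (n P K : ℕ) (E : (Fin n → KeyRing P K) → Prop) : 0 ≤ pr n P K E := by
  rw [pr]
  positivity

set_option maxHeartbeats 1000000 in
/-- Bound on the tail of the union-bound sum over large `r`: for `μ ∈ (0,1/2)`,
`Σ_{r=r_n+1}^{⌊n/2⌋} C(n,r)·P[U_r ≤ ⌊μP⌋]·e^{-(n-r)K²/P}
  ≤ (2e^{-K²/(2P)})^n (√μ (e/μ)^μ)^P`, where `r_n = min(⌊P/K⌋-1, ⌊n/2⌋)`. -/
theorem stmt17 (n P K : ℕ) (hK : 2 ≤ K) (hKP : K ≤ P) (h2K : 2 * K ≤ P) (hn : 2 ≤ n)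
    (μ : ℝ) (hμ0 : 0 < μ) (hμ2 : μ < 1 / 2) :
    ∑ r ∈ Finset.Icc (min (P / K - 1) (n / 2) + 1) (n / 2),
        (n.choose r : ℝ) *
          pr r P K (fun κ =>
            ((Finset.univ.biUnion (fun i => (κ i).1)).card ≤ ⌊μ * (P : ℝ)⌋₊)) *
          Real.exp (-(((n : ℝ) - (r : ℝ)) * (K : ℝ) ^ 2 / (P : ℝ))) ≤
      (2 * Real.exp (-((K : ℝ) ^ 2 / (2 * (P : ℝ))))) ^ n *
        (Real.sqrt μ * (Real.exp 1 / μ) ^ μ) ^ P := by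
  have hP : 0 < P := lt_of_lt_of_le (lt_of_lt_of_le two_pos hK) hKP
  have hPR : (0:ℝ) < P := by exact_mod_cast hP
  have hB : (0:ℝ) ≤ (Real.sqrt μ * (Real.exp 1 / μ) ^ μ) ^ P := by positivity
  have hE : (0:ℝ) < Real.exp (-((K : ℝ) ^ 2 / (2 * (P : ℝ)))) := Real.exp_pos _
  -- exponential factor bound
  have hEn : ∀ r : ℕ, r ≤ n / 2 →
      Real.exp (-(((n : ℝ) - (r : ℝ)) * (K : ℝ) ^ 2 / (P : ℝ)))
        ≤ Real.exp (-((K : ℝ) ^ 2 / (2 * (P : ℝ)))) ^ n := by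
    intro r hr
    rw [← Real.exp_nat_mul, Real.exp_le_exp]
    have hr' : (r:ℝ) ≤ (n:ℝ)/2 := by
      have h1 : (r:ℝ) ≤ ((n/2 : ℕ) : ℝ) := by exact_mod_cast hr
      have h2 : ((n/2 : ℕ) : ℝ) ≤ (n:ℝ)/2 := by
        have := Nat.cast_div_le (m := n) (n := 2) (α := ℝ)
        simpa using this
      linarith
    have hK2 : (0:ℝ) ≤ (K:ℝ)^2 / (P:ℝ) := by positivity
    have key : (n:ℝ)/2 * ((K:ℝ)^2/(P:ℝ)) ≤ ((n:ℝ) - (r:ℝ)) * ((K:ℝ)^2/(P:ℝ)) := by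
      apply mul_le_mul_of_nonneg_right _ hK2
      linarith
    have e1 : (n:ℝ) * -((K:ℝ)^2/(2*(P:ℝ))) = -((n:ℝ)/2 * ((K:ℝ)^2/(P:ℝ))) := by
      field_simp
    have e2 : -(((n : ℝ) - (r : ℝ)) * (K : ℝ) ^ 2 / (P : ℝ))
        = -(((n:ℝ) - (r:ℝ)) * ((K:ℝ)^2/(P:ℝ))) := by ring
    rw [e1, e2]
    linarith
  -- per-term bound
  have hterm : ∀ r ∈ Finset.Icc (min (P / K - 1) (n / 2) + 1) (n / 2),
      (n.choose r : ℝ) *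
          pr r P K (fun κ =>
            ((Finset.univ.biUnion (fun i => (κ i).1)).card ≤ ⌊μ * (P : ℝ)⌋₊)) *
          Real.exp (-(((n : ℝ) - (r : ℝ)) * (K : ℝ) ^ 2 / (P : ℝ)))
        ≤ (n.choose r : ℝ) * ((Real.sqrt μ * (Real.exp 1 / μ) ^ μ) ^ P *
            Real.exp (-((K : ℝ) ^ 2 / (2 * (P : ℝ)))) ^ n) := by
    intro r hr
    obtain ⟨hr1, hr2⟩ := Finset.mem_Icc.1 hr
    -- r ≥ P / K
    have hq : P / K ≤ r := by omega
    have hr1' : 1 ≤ r := by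
      have h2 : 2 ≤ P / K := (Nat.le_div_iff_mul_le (by omega)).2 (by omega)
      omega
    -- P ≤ 2 * (K * r) in ℕ
    have hPn : P ≤ 2 * (K * r) := by
      have hd := Nat.div_add_mod P K
      have hm := Nat.mod_lt P (show 0 < K by omega)
      have hmul : K * (P / K) ≤ K * r := Nat.mul_le_mul_left K hq
      omega
    have hrK : (P:ℝ)/2 ≤ (r:ℝ) * K := by
      have h : (P:ℝ) ≤ 2 * ((K:ℝ) * r) := by exact_mod_cast hPn
      linarith
    have hprb := pr_bound r P K hK hKP μ hμ0 (by linarith) hr1' hrK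
    have hprn := pr_nonneg r P K (fun κ =>
      ((Finset.univ.biUnion (fun i => (κ i).1)).card ≤ ⌊μ * (P : ℝ)⌋₊))
    have hc : (0:ℝ) ≤ (n.choose r : ℝ) := by positivity
    calc (n.choose r : ℝ) * pr r P K _ * Real.exp (-(((n : ℝ) - (r : ℝ)) * (K : ℝ) ^ 2 / (P : ℝ)))
        ≤ ((n.choose r : ℝ) * (Real.sqrt μ * (Real.exp 1 / μ) ^ μ) ^ P) *
          (Real.exp (-((K : ℝ) ^ 2 / (2 * (P : ℝ)))) ^ n) := by
          apply mul_le_mul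
          · exact mul_le_mul_of_nonneg_left hprb hc
          · exact hEn r hr2
          · exact le_of_lt (Real.exp_pos _)
          · positivity
      _ = (n.choose r : ℝ) * ((Real.sqrt μ * (Real.exp 1 / μ) ^ μ) ^ P *
            Real.exp (-((K : ℝ) ^ 2 / (2 * (P : ℝ)))) ^ n) := by ring
  calc ∑ r ∈ Finset.Icc (min (P / K - 1) (n / 2) + 1) (n / 2),
        (n.choose r : ℝ) *
          pr r P K (fun κ =>
            ((Finset.univ.biUnion (fun i => (κ i).1)).card ≤ ⌊μ * (P : ℝ)⌋₊)) *
          Real.exp (-(((n : ℝ) - (r : ℝ)) * (K : ℝ) ^ 2 / (P : ℝ)))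
      ≤ ∑ r ∈ Finset.Icc (min (P / K - 1) (n / 2) + 1) (n / 2),
        (n.choose r : ℝ) * ((Real.sqrt μ * (Real.exp 1 / μ) ^ μ) ^ P *
            Real.exp (-((K : ℝ) ^ 2 / (2 * (P : ℝ)))) ^ n) :=
        Finset.sum_le_sum hterm
    _ = (∑ r ∈ Finset.Icc (min (P / K - 1) (n / 2) + 1) (n / 2), (n.choose r : ℝ)) *
          ((Real.sqrt μ * (Real.exp 1 / μ) ^ μ) ^ P *
            Real.exp (-((K : ℝ) ^ 2 / (2 * (P : ℝ)))) ^ n) := by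
        rw [← Finset.sum_mul]
    _ ≤ (2:ℝ) ^ n * ((Real.sqrt μ * (Real.exp 1 / μ) ^ μ) ^ P *
            Real.exp (-((K : ℝ) ^ 2 / (2 * (P : ℝ)))) ^ n) := by
        apply mul_le_mul_of_nonneg_right _ (by positivity)
        have hsub : Finset.Icc (min (P / K - 1) (n / 2) + 1) (n / 2) ⊆ Finset.range (n+1) := by
          intro x hx
          obtain ⟨_, hx2⟩ := Finset.mem_Icc.1 hx
          have : x ≤ n := le_trans hx2 (Nat.div_le_self n 2)
          exact Finset.mem_range.2 (by omega)
        calc (∑ r ∈ Finset.Icc (min (P / K - 1) (n / 2) + 1) (n / 2), (n.choose r : ℝ))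
            ≤ ∑ r ∈ Finset.range (n+1), (n.choose r : ℝ) :=
              Finset.sum_le_sum_of_subset_of_nonneg hsub (fun i _ _ => by positivity)
          _ = (2:ℝ) ^ n := by
              rw [← Nat.cast_sum]
              rw [Nat.sum_range_choose]
              push_cast; ring
    _ = (2 * Real.exp (-((K : ℝ) ^ 2 / (2 * (P : ℝ))))) ^ n *
        (Real.sqrt μ * (Real.exp 1 / μ) ^ μ) ^ P := by
        rw [mul_pow]; ring
end
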